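/- arXiv:1807.10468 — 2 statements merged into one kernel-verified Lean document; each statement's English description precedes it below -/
import Mathlib

section
/- For the game CSG({1,2,4}), the Grundy value of the subdivided star S(1,1,1,k) is 1 if k ≡ 0 mod 3, 0 if k ≡ 1 mod 3, and 3 if k ≡ 2 mod 3; i.e. the Grundy sequence in k is purely periodic equal to 1,0,3 repeating. -/
open SimpleGraph

/-- The minimum excludant of a set of naturals. -/
noncomputable def mex (s : Set ℕ) : ℕ := sInf {n | n ∉ s}

/-- The graph induced on a set of vertices is connected. -/
def ConnOn {V : Type*} (G : SimpleGraph V) (s : Set V) : Prop := (G.induce s).Connected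

/-- A legal move in the connected subtraction game CSG(L) on the graph `G`:
from remaining vertex set `s`, remove the (nonempty) connected set `s \ t` whose
cardinality lies in `L`, leaving `t`, which must be empty or induce a connected graph. -/
def CsgMove {V : Type*} [DecidableEq V] (G : SimpleGraph V) (L : Set ℕ)
    (s t : Finset V) : Prop :=
  t ⊆ s ∧ (s \ t).Nonempty ∧ (s \ t).card ∈ L ∧
    ConnOn G (↑(s \ t) : Set V) ∧ (t = ∅ ∨ ConnOn G (↑t : Set V))

/-- The Grundy value of the position with remaining vertex set `s` in the game
CSG(L) played on `G`, defined by the mex recursion over all legal moves. -/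
noncomputable def csgGrundy {V : Type*} [DecidableEq V] (G : SimpleGraph V) (L : Set ℕ)
    (s : Finset V) : ℕ :=
  mex (Set.range fun t : {t : Finset V // CsgMove G L s t} =>
    have : t.1.card < s.card := by
      obtain ⟨x, hx⟩ := t.2.2.1
      rw [Finset.mem_sdiff] at hx
      exact Finset.card_lt_card ((Finset.ssubset_iff_of_subset t.2.1).2 ⟨x, hx.1, hx.2⟩)
    csgGrundy G L t.1)
termination_by s.card
decreasing_by exact this

/-- The subdivided star with `t` branches of lengths `l 0, …, l (t-1)` appended
to a central vertex `none`. -/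
def subdividedStar {t : ℕ} (l : Fin t → ℕ) :
    SimpleGraph (Option (Σ i : Fin t, Fin (l i))) :=
  SimpleGraph.fromRel fun a b =>
    match a, b with
    | none, some ⟨_, j⟩ => (j : ℕ) = 0
    | some ⟨i, j⟩, some ⟨i', j'⟩ => (i : ℕ) = (i' : ℕ) ∧ (j : ℕ) + 1 = (j' : ℕ)
    | _, _ => False

/-- The graph `G` with a path on `k` new vertices appended at the vertex `u`. -/
def appendPath {V : Type*} (G : SimpleGraph V) (u : V) (k : ℕ) :
    SimpleGraph (V ⊕ Fin k) :=
  SimpleGraph.fromRel fun a b =>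
    match a, b with
    | Sum.inl x, Sum.inl y => G.Adj x y
    | Sum.inl x, Sum.inr j => x = u ∧ (j : ℕ) = 0
    | Sum.inr j, Sum.inr j' => (j : ℕ) + 1 = (j' : ℕ)
    | _, _ => False

/-! ### mex and connectivity toolkit -/

lemma mex_eq {s : Set ℕ} {n : ℕ} (h1 : n ∉ s) (h2 : ∀ m < n, m ∈ s) : mex s = n := by
  refine le_antisymm (Nat.sInf_le h1) (le_of_not_gt fun h => ?_)
  exact (Nat.sInf_mem (⟨n, h1⟩ : {m | m ∉ s}.Nonempty)) (h2 _ h)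

lemma connOn_singleton {V : Type*} (G : SimpleGraph V) (v : V) : ConnOn G {v} := by
  haveI : Nonempty ({v} : Set V) := ⟨⟨v, rfl⟩⟩
  constructor
  intro x y
  have : x = y := Subtype.ext (x.2.trans y.2.symm)
  exact this ▸ Reachable.refl x

lemma connOn_insert {V : Type*} {G : SimpleGraph V} {s : Set V} {u v : V}
    (hu : u ∈ s) (hadj : G.Adj v u) (h : ConnOn G s) : ConnOn G (insert v s) := by
  classical
  have hsub : s ⊆ insert v s := Set.subset_insert v s
  let f : G.induce s →g G.induce (insert v s) :=
    ⟨fun x => ⟨x.1, hsub x.2⟩, fun {a b} hab => hab⟩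
  haveI : Nonempty (insert v s : Set V) := ⟨⟨v, Set.mem_insert v s⟩⟩
  constructor
  rintro ⟨x, hx⟩ ⟨y, hy⟩
  have key : ∀ z (hz : z ∈ insert v s), (G.induce (insert v s)).Reachable ⟨z, hz⟩
      ⟨u, hsub hu⟩ := by
    intro z hz
    rcases Set.mem_insert_iff.mp hz with rfl | hz'
    · exact Adj.reachable (by exact hadj)
    · exact (h.preconnected ⟨z, hz'⟩ ⟨u, hu⟩).map f
  exact (key x hx).trans (key y hy).symm

lemma not_connOn {V : Type*} {G : SimpleGraph V} {s s₁ s₂ : Set V}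
    (hs : ∀ x ∈ s, x ∈ s₁ ∨ x ∈ s₂) (h1 : (s₁ ∩ s).Nonempty) (h2 : (s₂ ∩ s).Nonempty)
    (hcross : ∀ a ∈ s₁, ∀ b ∈ s₂, a ∈ s → b ∈ s → ¬ G.Adj a b)
    (hd : ∀ a, a ∈ s₁ → a ∈ s₂ → False) :
    ¬ ConnOn G s := by
  intro h
  obtain ⟨x, hx1, hxs⟩ := h1
  obtain ⟨y, hy2, hys⟩ := h2
  obtain ⟨w⟩ := h.preconnected ⟨x, hxs⟩ ⟨y, hys⟩
  have main : ∀ (a b : ↥s) (w : (G.induce s).Walk a b), a.1 ∈ s₁ → b.1 ∈ s₁ := by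
    intro a b w
    induction w with
    | nil => exact id
    | @cons a' b' c' hab w ih =>
      intro ha
      rcases hs b'.1 b'.2 with hb | hb
      · exact ih hb
      · exact absurd (hab : G.Adj a'.1 b'.1) (hcross _ ha _ hb a'.2 b'.2)
  exact hd y (main _ _ w hx1) hy2

/-! ### vertex interface for `subdividedStar ![1,1,1,k]` -/

abbrev Vk (k : ℕ) := Option (Σ i : Fin 4, Fin (![1,1,1,k] i))
abbrev Gk (k : ℕ) : SimpleGraph (Vk k) := subdividedStar ![1,1,1,k]

variable {k : ℕ}

def ctr : Vk k := none
def pv (j : Fin k) : Vk k := some ⟨3, j⟩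
def lf (i : Fin 3) : Vk k := some ⟨i.castSucc, ⟨0, by fin_cases i <;> norm_num⟩⟩

lemma pv_inj {j j' : Fin k} (h : pv j = pv j') : j = j' := by
  have h2 := Option.some.inj h
  exact eq_of_heq (Sigma.mk.inj h2).2
lemma pv_injective : Function.Injective (pv : Fin k → Vk k) := fun _ _ => pv_inj
lemma lf_inj {i i' : Fin 3} (h : (lf i : Vk k) = lf i') : i = i' := by
  have h2 := congrArg Sigma.fst (Option.some.inj h)
  exact Fin.castSucc_injective _ h2
lemma lf_injective : Function.Injective (lf : Fin 3 → Vk k) := fun _ _ => lf_inj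
lemma ctr_ne_pv (j : Fin k) : (ctr : Vk k) ≠ pv j := by simp [ctr, pv]
lemma ctr_ne_lf (i : Fin 3) : (ctr : Vk k) ≠ lf i := by simp [ctr, lf]
lemma lf_ne_pv (i : Fin 3) (j : Fin k) : (lf i : Vk k) ≠ pv j := by
  intro h
  have h2 := congrArg Sigma.fst (Option.some.inj h)
  have h3 : ((i.castSucc : Fin 4) : ℕ) = ((3 : Fin 4) : ℕ) := congrArg Fin.val h2
  have h4 := i.isLt
  rw [Fin.coe_castSucc] at h3
  omega

lemma vertexCases (v : Vk k) : v = ctr ∨ (∃ i, v = lf i) ∨ ∃ j, v = pv j := by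
  rcases v with - | ⟨i, j⟩
  · exact Or.inl rfl
  · right
    obtain ⟨iv, hi⟩ := i
    interval_cases iv
    · refine Or.inl ⟨0, ?_⟩
      have : j = ⟨0, Nat.lt_of_le_of_lt (Nat.zero_le _) j.isLt⟩ :=
        Fin.ext (Nat.lt_one_iff.mp j.isLt)
      rw [this]; rfl
    · refine Or.inl ⟨1, ?_⟩
      have : j = ⟨0, Nat.lt_of_le_of_lt (Nat.zero_le _) j.isLt⟩ :=
        Fin.ext (Nat.lt_one_iff.mp j.isLt)
      rw [this]; rfl
    · refine Or.inl ⟨2, ?_⟩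
      have : j = ⟨0, Nat.lt_of_le_of_lt (Nat.zero_le _) j.isLt⟩ :=
        Fin.ext (Nat.lt_one_iff.mp j.isLt)
      rw [this]; rfl
    · exact Or.inr ⟨j, rfl⟩

lemma adj_ctr_pv (j : Fin k) : (Gk k).Adj ctr (pv j) ↔ (j : ℕ) = 0 := by
  show (SimpleGraph.fromRel _).Adj _ _ ↔ _
  rw [SimpleGraph.fromRel_adj]
  simp [ctr, pv]

lemma adj_ctr_lf (i : Fin 3) : (Gk k).Adj ctr (lf i) := by
  show (SimpleGraph.fromRel _).Adj _ _
  rw [SimpleGraph.fromRel_adj]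
  refine ⟨ctr_ne_lf i, Or.inl ?_⟩
  show (0 : ℕ) = 0
  rfl

lemma adj_pv_pv (j j' : Fin k) : (Gk k).Adj (pv j) (pv j') ↔
    ((j:ℕ) + 1 = j' ∨ (j':ℕ) + 1 = j) := by
  show (SimpleGraph.fromRel _).Adj _ _ ↔ _
  rw [SimpleGraph.fromRel_adj]
  constructor
  · rintro ⟨-, ⟨-, h⟩ | ⟨-, h⟩⟩
    · exact Or.inl h
    · exact Or.inr h
  · intro h
    refine ⟨fun he => ?_, ?_⟩
    · obtain rfl := pv_inj he; omega
    · rcases h with h | h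
      · exact Or.inl ⟨rfl, h⟩
      · exact Or.inr ⟨rfl, h⟩

lemma not_adj_lf_lf (i i' : Fin 3) : ¬ (Gk k).Adj (lf i) (lf i') := by
  show ¬ (SimpleGraph.fromRel _).Adj _ _
  rw [SimpleGraph.fromRel_adj]
  rintro ⟨-, ⟨-, h⟩ | ⟨-, h⟩⟩ <;> exact absurd h (by simp [lf])

lemma not_adj_lf_pv (i : Fin 3) (j : Fin k) : ¬ (Gk k).Adj (lf i) (pv j) := by
  show ¬ (SimpleGraph.fromRel _).Adj _ _
  rw [SimpleGraph.fromRel_adj]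
  rintro ⟨-, ⟨h, -⟩ | ⟨h, -⟩⟩ <;>
  · revert h
    show ¬ _
    fin_cases i <;> simp [lf] <;> decide
/-! ### the position sets -/

def pathFS (k a b : ℕ) : Finset (Vk k) :=
  ((Finset.Ico a (min b k)).attachFin
    (fun m hm => lt_of_lt_of_le (Finset.mem_Ico.mp hm).2 (min_le_right _ _))).image pv

def lfFS (k : ℕ) (A : Finset (Fin 3)) : Finset (Vk k) := A.image lf

def starFS (k : ℕ) (A : Finset (Fin 3)) (m : ℕ) : Finset (Vk k) :=
  insert ctr (lfFS k A ∪ pathFS k 0 m)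

lemma mem_pathFS {a b : ℕ} {x : Vk k} :
    x ∈ pathFS k a b ↔ ∃ j : Fin k, (a ≤ (j:ℕ) ∧ (j:ℕ) < b) ∧ x = pv j := by
  simp only [pathFS, Finset.mem_image, Finset.mem_attachFin, Finset.mem_Ico]
  constructor
  · rintro ⟨j, ⟨h1, h2⟩, rfl⟩
    exact ⟨j, ⟨h1, lt_of_lt_of_le h2 (min_le_left _ _)⟩, rfl⟩
  · rintro ⟨j, ⟨h1, h2⟩, rfl⟩
    exact ⟨j, ⟨h1, lt_min h2 j.isLt⟩, rfl⟩

lemma pv_mem_pathFS {a b : ℕ} {j : Fin k} :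
    pv j ∈ pathFS k a b ↔ a ≤ (j:ℕ) ∧ (j:ℕ) < b := by
  rw [mem_pathFS]
  constructor
  · rintro ⟨j', hj', he⟩
    obtain rfl := pv_inj he
    exact hj'
  · intro h
    exact ⟨j, h, rfl⟩

lemma ctr_not_mem_pathFS {a b : ℕ} : (ctr : Vk k) ∉ pathFS k a b := by
  rw [mem_pathFS]
  rintro ⟨j, -, he⟩
  exact ctr_ne_pv j he

lemma lf_not_mem_pathFS {a b : ℕ} {i : Fin 3} : (lf i : Vk k) ∉ pathFS k a b := by
  rw [mem_pathFS]
  rintro ⟨j, -, he⟩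
  exact lf_ne_pv i j he

lemma ctr_mem_starFS {A : Finset (Fin 3)} {m : ℕ} : (ctr : Vk k) ∈ starFS k A m :=
  Finset.mem_insert_self _ _

lemma lf_mem_starFS {A : Finset (Fin 3)} {m : ℕ} {i : Fin 3} :
    (lf i : Vk k) ∈ starFS k A m ↔ i ∈ A := by
  simp only [starFS, Finset.mem_insert, Finset.mem_union, lfFS, Finset.mem_image]
  constructor
  · rintro (h | ⟨i', hi', he⟩ | h)
    · exact absurd h.symm (ctr_ne_lf i)
    · obtain rfl := lf_inj he.symm; exact hi'
    · exact absurd h lf_not_mem_pathFS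
  · intro h
    exact Or.inr (Or.inl ⟨i, h, rfl⟩)

lemma pv_mem_starFS {A : Finset (Fin 3)} {m : ℕ} {j : Fin k} :
    pv j ∈ starFS k A m ↔ (j:ℕ) < m := by
  simp only [starFS, Finset.mem_insert, Finset.mem_union, lfFS, Finset.mem_image]
  constructor
  · rintro (h | ⟨i', hi', he⟩ | h)
    · exact absurd h.symm (ctr_ne_pv j)
    · exact absurd he (lf_ne_pv i' j)
    · exact (pv_mem_pathFS.mp h).2
  · intro h
    exact Or.inr (Or.inr (pv_mem_pathFS.mpr ⟨Nat.zero_le _, h⟩))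

lemma pathFS_card {a b : ℕ} (hb : b ≤ k) : (pathFS k a b).card = b - a := by
  rw [pathFS, Finset.card_image_of_injective _ pv_injective, Finset.card_attachFin,
    Nat.card_Ico, min_eq_left hb]

lemma pathFS_empty_iff {a b : ℕ} (hb : b ≤ k) : pathFS k a b = ∅ ↔ b ≤ a := by
  rw [← Finset.card_eq_zero, pathFS_card hb]
  omega

lemma starFS_card {A : Finset (Fin 3)} {m : ℕ} (hm : m ≤ k) :
    (starFS k A m).card = 1 + A.card + m := by
  rw [starFS, Finset.card_insert_of_notMem, Finset.card_union_of_disjoint]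
  · rw [lfFS, Finset.card_image_of_injective _ lf_injective, pathFS_card hm]
    omega
  · rw [Finset.disjoint_left]
    rintro x hx
    rw [lfFS, Finset.mem_image] at hx
    obtain ⟨i, -, rfl⟩ := hx
    exact lf_not_mem_pathFS
  · rw [Finset.mem_union]
    rintro (h | h)
    · rw [lfFS, Finset.mem_image] at h
      obtain ⟨i, -, he⟩ := h
      exact ctr_ne_lf i he.symm
    · exact ctr_not_mem_pathFS h

lemma univ_eq_starFS : (Finset.univ : Finset (Vk k)) = starFS k Finset.univ k := by
  ext x
  simp only [Finset.mem_univ, true_iff]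
  rcases vertexCases x with rfl | ⟨i, rfl⟩ | ⟨j, rfl⟩
  · exact ctr_mem_starFS
  · exact lf_mem_starFS.mpr (Finset.mem_univ i)
  · exact pv_mem_starFS.mpr j.isLt
/-! ### connectivity of the standard sets -/

lemma pathFS_succ {a b : ℕ} (hab : a ≤ b) (hb : b < k) :
    pathFS k a (b+1) = insert (pv ⟨b, hb⟩) (pathFS k a b) := by
  ext x
  rw [Finset.mem_insert, mem_pathFS, mem_pathFS]
  constructor
  · rintro ⟨j, ⟨h1, h2⟩, rfl⟩
    rcases Nat.lt_or_ge (j : ℕ) b with h | h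
    · exact Or.inr ⟨j, ⟨h1, h⟩, rfl⟩
    · left
      congr 1
      refine Fin.ext ?_
      show (j : ℕ) = b
      omega
  · rintro (rfl | ⟨j, ⟨h1, h2⟩, rfl⟩)
    · exact ⟨⟨b, hb⟩, ⟨hab, by simp⟩, rfl⟩
    · exact ⟨j, ⟨h1, by omega⟩, rfl⟩

lemma connOn_pathFS {a b : ℕ} (hab : a < b) (hb : b ≤ k) :
    ConnOn (Gk k) ↑(pathFS k a b) := by
  induction b with
  | zero => omega
  | succ b ih =>
    have hbk : b < k := hb
    rcases Nat.lt_or_ge a b with h | h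
    · rw [pathFS_succ (Nat.le_of_lt h) hbk, Finset.coe_insert]
      have hb1 : b - 1 < k := by omega
      refine connOn_insert (u := pv ⟨b-1, hb1⟩) ?_ ?_ (ih h (Nat.le_of_lt hbk))
      · rw [Finset.mem_coe, pv_mem_pathFS]
        simp only []
        omega
      · rw [adj_pv_pv]
        right
        simp only []
        omega
    · have hae : a = b := by omega
      subst hae
      have : pathFS k a (a+1) = {pv ⟨a, hbk⟩} := by
        rw [pathFS_succ (le_refl a) hbk]
        have : pathFS k a a = ∅ := pathFS_empty_iff (by omega) |>.mpr (le_refl a)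
        rw [this, insert_empty_eq]
      rw [this, Finset.coe_singleton]
      exact connOn_singleton _ _

lemma starFS_zero_insert (A : Finset (Fin 3)) (i : Fin 3) :
    starFS k (insert i A) 0 = insert (lf i) (starFS k A 0) := by
  ext x
  rcases vertexCases x with rfl | ⟨i', rfl⟩ | ⟨j, rfl⟩
  · simp [ctr_mem_starFS, Finset.mem_insert, (ctr_ne_lf i)]
  · rw [Finset.mem_insert, lf_mem_starFS, lf_mem_starFS, Finset.mem_insert]
    constructor
    · rintro (h | h)
      · exact Or.inl (congrArg lf h)
      · exact Or.inr h
    · rintro (h | h)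
      · exact Or.inl (lf_inj h)
      · exact Or.inr h
  · rw [Finset.mem_insert, pv_mem_starFS, pv_mem_starFS]
    simp [(lf_ne_pv i j).symm]

lemma starFS_succ {m : ℕ} (A : Finset (Fin 3)) (hm : m < k) :
    starFS k A (m+1) = insert (pv ⟨m, hm⟩) (starFS k A m) := by
  ext x
  rcases vertexCases x with rfl | ⟨i', rfl⟩ | ⟨j, rfl⟩
  · simp [ctr_mem_starFS, Finset.mem_insert, (ctr_ne_pv ⟨m, hm⟩)]
  · rw [Finset.mem_insert, lf_mem_starFS, lf_mem_starFS]
    simp [(lf_ne_pv i' ⟨m, hm⟩)]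
  · rw [Finset.mem_insert, pv_mem_starFS, pv_mem_starFS]
    constructor
    · intro h
      rcases Nat.lt_or_ge (j:ℕ) m with h' | h'
      · exact Or.inr h'
      · refine Or.inl (congrArg pv (Fin.ext ?_))
        show (j : ℕ) = m
        omega
    · rintro (h | h)
      · obtain rfl := pv_inj h
        simp only []
        omega
      · omega

lemma connOn_starFS {m : ℕ} (A : Finset (Fin 3)) (hm : m ≤ k) :
    ConnOn (Gk k) ↑(starFS k A m) := by
  induction m with
  | zero =>
    induction A using Finset.induction_on with
    | empty =>
      have : starFS k ∅ 0 = {ctr} := by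
        ext x
        rcases vertexCases x with rfl | ⟨i', rfl⟩ | ⟨j, rfl⟩
        · simp [ctr_mem_starFS]
        · simp [lf_mem_starFS, (ctr_ne_lf i').symm]
        · simp [pv_mem_starFS, (ctr_ne_pv j).symm]
      rw [this, Finset.coe_singleton]
      exact connOn_singleton _ _
    | @insert i A hi ih =>
      rw [starFS_zero_insert, Finset.coe_insert]
      exact connOn_insert (Finset.mem_coe.mpr ctr_mem_starFS) (adj_ctr_lf i).symm ih
  | succ m ih =>
    have hmk : m < k := hm
    rw [starFS_succ A hmk, Finset.coe_insert]
    rcases Nat.eq_zero_or_pos m with rfl | hpos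
    · refine connOn_insert (u := ctr) (Finset.mem_coe.mpr ctr_mem_starFS) ?_
        (ih (by omega))
      exact ((adj_ctr_pv ⟨0, hmk⟩).mpr rfl).symm
    · have hm1 : m - 1 < k := by omega
      refine connOn_insert (u := pv ⟨m-1, hm1⟩) ?_ ?_ (ih (by omega))
      · rw [Finset.mem_coe, pv_mem_starFS]
        simp only []
        omega
      · rw [adj_pv_pv]
        right
        simp only []
        omega
/-! ### classification of connected sets -/

lemma gap_split {s : Finset (Vk k)} (h : ConnOn (Gk k) ↑s) {j₀ : Fin k}
    (h0 : pv j₀ ∉ s) {u : Fin k} (hu : pv u ∈ s) (huj : (j₀:ℕ) < (u:ℕ))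
    {x : Vk k} (hx : x ∈ s) (hxlow : ∀ w : Fin k, x = pv w → (w:ℕ) ≤ (j₀:ℕ)) :
    False := by
  refine not_connOn (s₁ := {y | ∀ w : Fin k, y = pv w → (w:ℕ) ≤ (j₀:ℕ)})
    (s₂ := {y | ∃ w : Fin k, y = pv w ∧ (j₀:ℕ) < (w:ℕ)}) ?_ ?_ ?_ ?_ ?_ h
  · intro y _
    by_cases hy : ∃ w : Fin k, y = pv w ∧ (j₀:ℕ) < (w:ℕ)
    · exact Or.inr hy
    · push_neg at hy
      refine Or.inl fun w hw => ?_
      by_contra hlt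
      exact absurd (hy w hw) (by omega)
  · exact ⟨x, hxlow, Finset.mem_coe.mpr hx⟩
  · exact ⟨pv u, ⟨u, rfl, huj⟩, Finset.mem_coe.mpr hu⟩
  · rintro a ha b hb has hbs hadj
    obtain ⟨w, rfl, hw⟩ := hb
    rcases vertexCases a with rfl | ⟨i, rfl⟩ | ⟨w', rfl⟩
    · rw [adj_ctr_pv] at hadj
      omega
    · exact not_adj_lf_pv i w hadj
    · have hw' : (w':ℕ) ≤ (j₀:ℕ) := ha w' rfl
      rw [adj_pv_pv] at hadj
      rcases hadj with h1 | h1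
      · have : w' = j₀ := Fin.ext (by omega)
        subst this
        exact h0 (Finset.mem_coe.mp has)
      · omega
  · rintro a ha ⟨w, rfl, hw⟩
    have := ha w rfl
    omega

lemma connOn_classify {s : Finset (Vk k)} (h : ConnOn (Gk k) ↑s) :
    (∃ i, s = {lf i}) ∨
    (∃ a b, a < b ∧ b ≤ k ∧ s = pathFS k a b) ∨
    (∃ A m, m ≤ k ∧ s = starFS k A m) := by
  classical
  have hne : s.Nonempty := by
    obtain ⟨⟨x, hx⟩⟩ := h.nonempty
    exact ⟨x, Finset.mem_coe.mp hx⟩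
  by_cases hctr : ctr ∈ s
  · -- star case
    right; right
    set T : Finset (Fin k) := Finset.univ.filter (fun j => pv j ∈ s) with hT
    have hTmem : ∀ j : Fin k, j ∈ T ↔ pv j ∈ s := by
      intro j; simp [hT]
    have hclosed : ∀ j ∈ T, ∀ j' : Fin k, (j':ℕ) ≤ (j:ℕ) → j' ∈ T := by
      intro j hj j' hj'
      rcases Nat.eq_or_lt_of_le hj' with he | hlt
      · have : j' = j := Fin.ext he
        exact this ▸ hj
      · rw [hTmem]
        by_contra h0
        exact gap_split h h0 ((hTmem j).mp hj) hlt hctr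
          (fun w hw => absurd hw (ctr_ne_pv w))
    set m := T.card with hm
    have hmk : m ≤ k := by
      calc T.card ≤ (Finset.univ : Finset (Fin k)).card := Finset.card_le_univ T
      _ = k := by simp
    have hTiff : ∀ j : Fin k, j ∈ T ↔ (j:ℕ) < m := by
      intro j
      constructor
      · intro hj
        have hsub : Finset.range ((j:ℕ)+1) ⊆ Finset.image (fun u : Fin k => (u:ℕ)) T := by
          intro n hn
          rw [Finset.mem_range] at hn
          rw [Finset.mem_image]
          have hnk : n < k := by have := j.isLt; omega
          exact ⟨⟨n, hnk⟩, hclosed j hj ⟨n, hnk⟩ (by simp; omega), rfl⟩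
        have := Finset.card_le_card hsub
        rw [Finset.card_range, Finset.card_image_of_injective _ Fin.val_injective] at this
        omega
      · intro hj
        by_contra h0
        have hsub : T ⊆ Finset.univ.filter (fun u : Fin k => (u:ℕ) < (j:ℕ)) := by
          intro u hu
          rw [Finset.mem_filter]
          refine ⟨Finset.mem_univ u, ?_⟩
          by_contra hge
          exact h0 (hclosed u hu j (by omega))
        have hcard := Finset.card_le_card hsub
        have : (Finset.univ.filter (fun u : Fin k => (u:ℕ) < (j:ℕ))).card ≤ (j:ℕ) := by
          have hsub2 : Finset.image (fun u : Fin k => (u:ℕ))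
              (Finset.univ.filter (fun u : Fin k => (u:ℕ) < (j:ℕ))) ⊆ Finset.range (j:ℕ) := by
            intro n hn
            simp only [Finset.mem_image, Finset.mem_filter] at hn
            obtain ⟨u, ⟨-, hu⟩, rfl⟩ := hn
            rwa [Finset.mem_range]
          have := Finset.card_le_card hsub2
          rwa [Finset.card_image_of_injective _ Fin.val_injective, Finset.card_range] at this
        omega
    refine ⟨Finset.univ.filter (fun i => lf i ∈ s), m, hmk, ?_⟩
    ext x
    rcases vertexCases x with rfl | ⟨i, rfl⟩ | ⟨j, rfl⟩
    · simp [hctr, ctr_mem_starFS]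
    · rw [lf_mem_starFS, Finset.mem_filter]
      simp
    · rw [pv_mem_starFS, ← hTiff, hTmem]
  · by_cases hlf : ∃ i, lf i ∈ s
    · -- singleton leaf case
      obtain ⟨i, hi⟩ := hlf
      left
      refine ⟨i, ?_⟩
      rw [Finset.eq_singleton_iff_unique_mem]
      refine ⟨hi, fun x hx => ?_⟩
      by_contra hxne
      refine not_connOn (s₁ := {lf i}) (s₂ := {y | y ≠ lf i}) ?_ ?_ ?_ ?_ ?_ h
      · intro y _
        by_cases hy : y = lf i
        · exact Or.inl hy
        · exact Or.inr hy
      · exact ⟨lf i, rfl, Finset.mem_coe.mpr hi⟩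
      · exact ⟨x, hxne, Finset.mem_coe.mpr hx⟩
      · rintro a rfl b hb habs hbs hadj
        rcases vertexCases b with rfl | ⟨i', rfl⟩ | ⟨j, rfl⟩
        · exact hctr (Finset.mem_coe.mp hbs)
        · exact not_adj_lf_lf i i' hadj
        · exact not_adj_lf_pv i j hadj
      · rintro a rfl hne'
        exact hne' rfl
    · -- path case
      right; left
      push_neg at hlf
      have hallpv : ∀ x ∈ s, ∃ j : Fin k, x = pv j := by
        intro x hx
        rcases vertexCases x with rfl | ⟨i, rfl⟩ | ⟨j, rfl⟩
        · exact absurd hx hctr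
        · exact absurd hx (hlf i)
        · exact ⟨j, rfl⟩
      set T : Finset (Fin k) := Finset.univ.filter (fun j => pv j ∈ s) with hT
      have hTmem : ∀ j : Fin k, j ∈ T ↔ pv j ∈ s := by
        intro j; simp [hT]
      have hTne : T.Nonempty := by
        obtain ⟨x, hx⟩ := hne
        obtain ⟨j, rfl⟩ := hallpv x hx
        exact ⟨j, (hTmem j).mpr hx⟩
      set lo := T.min' hTne with hlo
      set hi := T.max' hTne with hhi
      have hint : ∀ j : Fin k, (lo:ℕ) ≤ (j:ℕ) → (j:ℕ) ≤ (hi:ℕ) → j ∈ T := by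
        intro j h1 h2
        by_contra h0
        have hjhi : (j:ℕ) < (hi:ℕ) := by
          rcases Nat.eq_or_lt_of_le h2 with he | hlt
          · exact absurd ((Fin.ext he : j = hi) ▸ T.max'_mem hTne) h0
          · exact hlt
        rw [hTmem] at h0
        exact gap_split h h0 ((hTmem hi).mp (T.max'_mem hTne)) hjhi
          ((hTmem lo).mp (T.min'_mem hTne))
          (fun w hw => by rw [← pv_inj hw]; exact h1)
      have hlom : lo ≤ hi := T.min'_le _ (T.max'_mem hTne)
      rw [Fin.le_def] at hlom
      refine ⟨(lo:ℕ), (hi:ℕ)+1, by omega, hi.isLt, ?_⟩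
      ext x
      rcases vertexCases x with rfl | ⟨i, rfl⟩ | ⟨j, rfl⟩
      · simp [hctr, ctr_not_mem_pathFS]
      · simp [hlf i, lf_not_mem_pathFS]
      · rw [pv_mem_pathFS, ← hTmem]
        constructor
        · intro hj
          have h1 := T.min'_le j hj
          have h2 := T.le_max' j hj
          rw [Fin.le_def] at h1 h2
          omega
        · rintro ⟨h1, h2⟩
          exact hint j h1 (by omega)
/-! ### grundy machinery -/

lemma csgGrundy_def {V : Type*} [DecidableEq V] (G : SimpleGraph V) (L : Set ℕ)
    (s : Finset V) :
    csgGrundy G L s =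
      mex (Set.range fun t : {t : Finset V // CsgMove G L s t} => csgGrundy G L t.1) := by
  rw [csgGrundy]

lemma csgGrundy_eq {V : Type*} [DecidableEq V] {G : SimpleGraph V} {L : Set ℕ}
    {s : Finset V} {n : ℕ}
    (h1 : ∀ t, CsgMove G L s t → csgGrundy G L t ≠ n)
    (h2 : ∀ m < n, ∃ t, CsgMove G L s t ∧ csgGrundy G L t = m) :
    csgGrundy G L s = n := by
  rw [csgGrundy_def]
  apply mex_eq
  · rintro ⟨⟨t, ht⟩, hval⟩
    exact h1 t ht hval
  · intro m hm
    obtain ⟨t, ht, hv⟩ := h2 m hm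
    exact ⟨⟨t, ht⟩, hv⟩

lemma csgGrundy_empty {V : Type*} [DecidableEq V] (G : SimpleGraph V) (L : Set ℕ) :
    csgGrundy G L (∅ : Finset V) = 0 := by
  apply csgGrundy_eq
  · rintro t ⟨hts, hne, -⟩
    rw [Finset.subset_empty] at hts
    subst hts
    simp at hne
  · intro m hm
    omega

lemma csgGrundy_singleton {V : Type*} [DecidableEq V] (G : SimpleGraph V) {L : Set ℕ}
    (hL : 1 ∈ L) (v : V) : csgGrundy G L {v} = 1 := by
  apply csgGrundy_eq
  · rintro t ⟨hts, hne, -⟩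
    rcases Finset.subset_singleton_iff.mp hts with rfl | rfl
    · rw [csgGrundy_empty]
      omega
    · simp at hne
  · intro m hm
    have hm0 : m = 0 := by omega
    subst hm0
    refine ⟨∅, ⟨Finset.empty_subset _, ?_, ?_, ?_, Or.inl rfl⟩, csgGrundy_empty G L⟩
    · simp
    · simpa using hL
    · simpa using connOn_singleton G v

/-! ### grundy of paths -/

lemma mem_L124 {n : ℕ} : n ∈ ({1, 2, 4} : Set ℕ) ↔ n = 1 ∨ n = 2 ∨ n = 4 := by
  simp [Set.mem_insert_iff]

theorem grundy_path (n : ℕ) : ∀ a b : ℕ, b ≤ k → b - a = n →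
    csgGrundy (Gk k) ({1, 2, 4} : Set ℕ) (pathFS k a b) = n % 3 := by
  induction n using Nat.strong_induction_on with
  | _ n ih =>
  intro a b hbk hab
  rcases Nat.eq_zero_or_pos n with rfl | hpos
  · rw [(pathFS_empty_iff hbk).mpr (by omega), csgGrundy_empty]
  have hablt : a < b := by omega
  apply csgGrundy_eq
  · -- every move leads to a value ≠ n % 3
    rintro t ⟨hts, hne, hcard, hconn, htconn⟩
    set r := pathFS k a b \ t with hr
    have hrsub : r ⊆ pathFS k a b := Finset.sdiff_subset
    have htr : pathFS k a b \ r = t := Finset.sdiff_sdiff_eq_self hts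
    have hcr : r.card ∈ ({1, 2, 4} : Set ℕ) := hcard
    have hcrn : r.card ≤ n := by
      have := Finset.card_le_card hrsub
      rwa [pathFS_card hbk, hab] at this
    rcases htconn with rfl | htc
    · -- t = ∅ : value 0, and n ∈ L so n % 3 ≠ 0
      rw [csgGrundy_empty]
      have : r = pathFS k a b := by rw [hr, Finset.sdiff_empty]
      rw [this, pathFS_card hbk, hab, mem_L124] at hcr
      omega
    · rcases connOn_classify htc with ⟨i, rfl⟩ | ⟨a'', b'', hab'', hb''k, rfl⟩ | ⟨A, m, -, rfl⟩
      · exact absurd (hts (Finset.mem_singleton_self _)) lf_not_mem_pathFS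
      · -- t is a path
        have hcardt : b'' - a'' = n - r.card := by
          have h1 : (pathFS k a'' b'').card = (pathFS k a b).card - r.card := by
            rw [← htr]
            exact Finset.card_sdiff_of_subset hrsub
          rw [pathFS_card hb''k, pathFS_card hbk, hab] at h1
          exact h1
        have hlt : n - r.card < n := by
          rw [mem_L124] at hcr
          omega
        rw [ih _ hlt a'' b'' hb''k hcardt]
        rw [mem_L124] at hcr
        have hpos' : 0 < b'' - a'' := by omega
        omega
      · exact absurd (hts ctr_mem_starFS) ctr_not_mem_pathFS
  · -- witnesses
    intro m hm
    set d := n % 3 - m with hd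
    have hd12 : d = 1 ∨ d = 2 := by omega
    have hdn : d ≤ n := by omega
    have hsd : pathFS k a b \ pathFS k a (b - d) = pathFS k (b - d) b := by
      ext x
      rw [Finset.mem_sdiff, mem_pathFS, mem_pathFS, mem_pathFS]
      constructor
      · rintro ⟨⟨j, ⟨h1, h2⟩, rfl⟩, h3⟩
        refine ⟨j, ⟨?_, h2⟩, rfl⟩
        by_contra h4
        exact h3 ⟨j, ⟨h1, by omega⟩, rfl⟩
      · rintro ⟨j, ⟨h1, h2⟩, he⟩
        subst he
        refine ⟨⟨j, ⟨by omega, h2⟩, rfl⟩, ?_⟩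
        rintro ⟨j', ⟨h3, h4⟩, he⟩
        obtain rfl := pv_inj he
        omega
    refine ⟨pathFS k a (b - d), ⟨?_, ?_, ?_, ?_, ?_⟩, ?_⟩
    · intro x hx
      rw [mem_pathFS] at hx ⊢
      obtain ⟨j, ⟨h1, h2⟩, rfl⟩ := hx
      exact ⟨j, ⟨h1, by omega⟩, rfl⟩
    · rw [hsd, ← Finset.card_pos, pathFS_card hbk]
      omega
    · rw [hsd]
      show (pathFS k (b-d) b).card ∈ _
      rw [pathFS_card hbk, mem_L124]
      omega
    · rw [hsd]
      exact connOn_pathFS (by omega) hbk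
    · rcases Nat.lt_or_ge a (b - d) with h | h
      · exact Or.inr (connOn_pathFS h (by omega))
      · exact Or.inl ((pathFS_empty_iff (by omega)).mpr h)
    · rw [ih (n - d) (by omega) a (b - d) (by omega) (by omega)]
      omega
/-! ### sdiff computations and standard moves for star positions -/

lemma starFS_sdiff_lf {A : Finset (Fin 3)} {m : ℕ} {i : Fin 3} :
    starFS k A m \ {lf i} = starFS k (A.erase i) m := by
  ext x
  rw [Finset.mem_sdiff, Finset.mem_singleton]
  rcases vertexCases x with rfl | ⟨i', rfl⟩ | ⟨j, rfl⟩
  · simp [ctr_mem_starFS, ctr_ne_lf i]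
  · rw [lf_mem_starFS, lf_mem_starFS, Finset.mem_erase]
    constructor
    · rintro ⟨h1, h2⟩
      exact ⟨fun he => h2 (congrArg lf he), h1⟩
    · rintro ⟨h1, h2⟩
      exact ⟨h2, fun he => h1 (lf_inj he)⟩
  · simp only [pv_mem_starFS]
    simp [(lf_ne_pv i j).symm]

lemma starFS_sdiff_pathFS {A : Finset (Fin 3)} {m p : ℕ} (hp : p ≤ m) :
    starFS k A m \ pathFS k p m = starFS k A p := by
  ext x
  rw [Finset.mem_sdiff]
  rcases vertexCases x with rfl | ⟨i', rfl⟩ | ⟨j, rfl⟩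
  · simp [ctr_mem_starFS, ctr_not_mem_pathFS]
  · simp [lf_mem_starFS, lf_not_mem_pathFS]
  · rw [pv_mem_starFS, pv_mem_starFS, pv_mem_pathFS]
    omega

lemma starFS_sdiff_starFS {A : Finset (Fin 3)} {m p : ℕ} (hp : p ≤ m) :
    starFS k A m \ starFS k A p = pathFS k p m := by
  ext x
  rw [Finset.mem_sdiff]
  rcases vertexCases x with rfl | ⟨i', rfl⟩ | ⟨j, rfl⟩
  · simp [ctr_mem_starFS, ctr_not_mem_pathFS]
  · simp [lf_mem_starFS, lf_not_mem_pathFS]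
  · rw [pv_mem_starFS, pv_mem_starFS, pv_mem_pathFS]
    omega

lemma starFS_subset_starFS {A B : Finset (Fin 3)} {m p : ℕ} (hAB : A ⊆ B) (hpm : p ≤ m) :
    starFS k A p ⊆ starFS k B m := by
  intro x hx
  rcases vertexCases x with rfl | ⟨i', rfl⟩ | ⟨j, rfl⟩
  · exact ctr_mem_starFS
  · rw [lf_mem_starFS] at hx ⊢
    exact hAB hx
  · rw [pv_mem_starFS] at hx ⊢
    omega

lemma pathFS_subset_starFS {A : Finset (Fin 3)} {m p : ℕ} :
    pathFS k p m ⊆ starFS k A m := by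
  intro x hx
  rw [mem_pathFS] at hx
  obtain ⟨j, ⟨-, h2⟩, rfl⟩ := hx
  exact pv_mem_starFS.mpr h2

lemma move_suffix (A : Finset (Fin 3)) {m d : ℕ} (hm : m ≤ k)
    (hd : d ∈ ({1, 2, 4} : Set ℕ)) (hdm : d ≤ m) :
    CsgMove (Gk k) ({1, 2, 4} : Set ℕ) (starFS k A m) (starFS k A (m - d)) := by
  have hsd := starFS_sdiff_starFS (k := k) (A := A) (m := m) (p := m - d) (by omega)
  refine ⟨starFS_subset_starFS (le_refl A) (by omega), ?_, ?_, ?_, ?_⟩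
  · rw [hsd, ← Finset.card_pos, pathFS_card hm]
    rw [mem_L124] at hd
    omega
  · rw [hsd]
    show (pathFS k (m - d) m).card ∈ _
    rw [pathFS_card hm]
    have : m - (m - d) = d := by omega
    rw [this]
    exact hd
  · rw [hsd]
    refine connOn_pathFS ?_ hm
    rw [mem_L124] at hd
    omega
  · exact Or.inr (connOn_starFS A (by omega))

lemma move_prefix (A : Finset (Fin 3)) {m p : ℕ} (hm : m ≤ k) (hp : p ≤ m)
    (hcard : 1 + A.card + p ∈ ({1, 2, 4} : Set ℕ)) :
    CsgMove (Gk k) ({1, 2, 4} : Set ℕ) (starFS k A m) (pathFS k p m) := by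
  have hsd := starFS_sdiff_pathFS (k := k) (A := A) hp
  refine ⟨pathFS_subset_starFS, ?_, ?_, ?_, ?_⟩
  · rw [hsd]
    exact ⟨ctr, ctr_mem_starFS⟩
  · rw [hsd]
    show (starFS k A p).card ∈ _
    rw [starFS_card (by omega)]
    exact hcard
  · rw [hsd]
    exact connOn_starFS A (by omega)
  · rcases Nat.lt_or_ge p m with h | h
    · exact Or.inr (connOn_pathFS h hm)
    · exact Or.inl ((pathFS_empty_iff hm).mpr h)

lemma move_leaf (A : Finset (Fin 3)) {m : ℕ} {i : Fin 3} (hm : m ≤ k) (hi : i ∈ A) :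
    CsgMove (Gk k) ({1, 2, 4} : Set ℕ) (starFS k A m) (starFS k (A.erase i) m) := by
  have hsd : starFS k A m \ starFS k (A.erase i) m = {lf i} := by
    ext x
    rw [Finset.mem_sdiff, Finset.mem_singleton]
    rcases vertexCases x with rfl | ⟨i', rfl⟩ | ⟨j, rfl⟩
    · simp [ctr_mem_starFS, (ctr_ne_lf i)]
    · rw [lf_mem_starFS, lf_mem_starFS, Finset.mem_erase]
      constructor
      · rintro ⟨h1, h2⟩
        by_contra hne
        exact h2 ⟨fun he => hne (congrArg lf he), h1⟩
      · intro he
        obtain rfl := lf_inj he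
        exact ⟨hi, fun h => h.1 rfl⟩
    · simp only [pv_mem_starFS]
      simp [(lf_ne_pv i j).symm]
  refine ⟨starFS_subset_starFS (Finset.erase_subset i A) (le_refl m), ?_, ?_, ?_, ?_⟩
  · rw [hsd]
    exact ⟨lf i, Finset.mem_singleton_self _⟩
  · rw [hsd]
    show ({lf i} : Finset (Vk k)).card ∈ _
    rw [Finset.card_singleton, mem_L124]
    tauto
  · rw [hsd, Finset.coe_singleton]
    exact connOn_singleton _ _
  · exact Or.inr (connOn_starFS _ hm)
/-! ### grundy of star positions -/

def sval (c m : ℕ) : ℕ :=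
  if c = 0 then (m + 1) % 3
  else if c = 1 then (m + 2) % 3
  else if c = 2 then m % 3
  else if m % 3 = 0 then 1 else if m % 3 = 1 then 0 else 3

lemma sval0 (m : ℕ) : sval 0 m = (m + 1) % 3 := by simp [sval]
lemma sval1 (m : ℕ) : sval 1 m = (m + 2) % 3 := by simp [sval]
lemma sval2 (m : ℕ) : sval 2 m = m % 3 := by simp [sval]
lemma sval3 (m : ℕ) : sval 3 m = if m % 3 = 0 then 1 else if m % 3 = 1 then 0 else 3 := by
  simp [sval]

theorem grundy_star (n : ℕ) : ∀ (A : Finset (Fin 3)) (m : ℕ), m ≤ k → A.card + m = n →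
    csgGrundy (Gk k) ({1, 2, 4} : Set ℕ) (starFS k A m) = sval A.card m := by
  induction n using Nat.strong_induction_on with
  | _ n ih =>
  intro A m hm hn
  have hA3 : A.card ≤ 3 := by
    calc A.card ≤ (Finset.univ : Finset (Fin 3)).card := Finset.card_le_univ A
      _ = 3 := by simp
  apply csgGrundy_eq
  · -- (I) every move leads to a value different from sval A.card m
    rintro t ⟨hts, hne, hcard, hconn, htconn⟩
    set r := starFS k A m \ t with hr
    have hrsub : r ⊆ starFS k A m := Finset.sdiff_subset
    have htr : starFS k A m \ r = t := Finset.sdiff_sdiff_eq_self hts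
    rcases connOn_classify hconn with ⟨i, hre⟩ | ⟨a', b', hab', hb'k, hre⟩ | ⟨A', p, hpk, hre⟩
    · -- removed a single leaf
      have hiA : i ∈ A := by
        have h1 : lf i ∈ r := by rw [hre]; exact Finset.mem_singleton_self _
        exact lf_mem_starFS.mp (hrsub h1)
      have hc1 : 1 ≤ A.card := Finset.card_pos.mpr ⟨i, hiA⟩
      have hteq : t = starFS k (A.erase i) m := by rw [← htr, hre, starFS_sdiff_lf]
      have hlt : (A.erase i).card + m < n := by
        rw [Finset.card_erase_of_mem hiA]; omega
      rw [hteq, ih _ hlt (A.erase i) m hm rfl, Finset.card_erase_of_mem hiA]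
      simp only [sval]
      split_ifs <;> omega
    · -- removed a path segment (suffix)
      have hctr_t : ctr ∈ t := by
        rw [← htr, Finset.mem_sdiff]
        refine ⟨ctr_mem_starFS, ?_⟩
        rw [hre]
        exact ctr_not_mem_pathFS
      have hb'm : b' ≤ m := by
        have hmem : pv ⟨b' - 1, by omega⟩ ∈ r := by
          rw [hre]
          exact pv_mem_pathFS.mpr ⟨show a' ≤ b' - 1 by omega, show b' - 1 < b' by omega⟩
        have h2 := pv_mem_starFS.mp (hrsub hmem)
        have h3 : b' - 1 < m := h2
        omega
      have hb'e : b' = m := by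
        by_contra hne'
        have hblt : b' < m := by omega
        have h1 : pv ⟨b', by omega⟩ ∈ t := by
          rw [← htr, Finset.mem_sdiff]
          refine ⟨pv_mem_starFS.mpr (show b' < m from hblt), ?_⟩
          rw [hre]
          intro hmem
          rw [pv_mem_pathFS] at hmem
          have h2 : b' < b' := hmem.2
          omega
        have h0 : pv ⟨a', by omega⟩ ∉ t := by
          rw [← htr, Finset.mem_sdiff]
          rintro ⟨-, hnot⟩
          refine hnot ?_
          rw [hre]
          exact pv_mem_pathFS.mpr ⟨show a' ≤ a' from le_refl a', show a' < b' from hab'⟩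
        rcases htconn with rfl | htc
        · exact absurd hctr_t (Finset.notMem_empty _)
        · exact gap_split htc h0 h1 (show a' < b' from hab') hctr_t
            (fun w hw => absurd hw (ctr_ne_pv w))
      subst hb'e
      have hteq : t = starFS k A a' := by
        rw [← htr, hre, starFS_sdiff_pathFS (by omega)]
      have hlt : A.card + a' < n := by omega
      rw [hteq, ih _ hlt A a' (by omega) rfl]
      have hcr : r.card ∈ ({1, 2, 4} : Set ℕ) := hcard
      rw [hre, pathFS_card hb'k, mem_L124] at hcr
      simp only [sval]
      split_ifs <;> omega
    · -- removed a set containing the centre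
      have hctr_t : ctr ∉ t := by
        rw [← htr, Finset.mem_sdiff]
        rintro ⟨-, hnot⟩
        refine hnot ?_
        rw [hre]
        exact ctr_mem_starFS
      have hA'A : A' ⊆ A := by
        intro i hi
        have h1 : lf i ∈ r := by rw [hre]; exact lf_mem_starFS.mpr hi
        exact lf_mem_starFS.mp (hrsub h1)
      have hpm : p ≤ m := by
        by_contra hlt
        have hmk2 : m < k := by omega
        have h1 : pv ⟨m, hmk2⟩ ∈ r := by
          rw [hre]
          exact pv_mem_starFS.mpr (show m < p by omega)
        have h2 := pv_mem_starFS.mp (hrsub h1)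
        have h3 : m < m := h2
        omega
      have hcr : r.card = 1 + A'.card + p := by rw [hre, starFS_card hpk]
      have hcrL : r.card ∈ ({1, 2, 4} : Set ℕ) := hcard
      have hA'3 : A'.card ≤ A.card := Finset.card_le_card hA'A
      rcases htconn with rfl | htc
      · -- t = ∅
        rw [csgGrundy_empty]
        have hrs : r = starFS k A m := by rw [hr, Finset.sdiff_empty]
        have hcs := hcrL
        rw [hrs, starFS_card hm, mem_L124] at hcs
        simp only [sval]
        split_ifs <;> omega
      · rcases connOn_classify htc with ⟨i, hte⟩ | ⟨a'', b'', hab'', hb''k, hte⟩ |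
          ⟨A2, m2, -, hte⟩
        · -- t is a single leaf
          have hiA : i ∈ A := by
            have h1 : lf i ∈ t := by rw [hte]; exact Finset.mem_singleton_self _
            exact lf_mem_starFS.mp (hts h1)
          have hiA' : i ∉ A' := by
            intro hi
            have h1 : lf i ∈ r := by rw [hre]; exact lf_mem_starFS.mpr hi
            have h2 : lf i ∈ t := by rw [hte]; exact Finset.mem_singleton_self _
            rw [← htr, Finset.mem_sdiff] at h2
            exact h2.2 h1
          have hpm2 : m ≤ p := by
            by_contra hlt2
            have hp2 : p < k := by omega
            have h1 : pv ⟨p, hp2⟩ ∈ t := by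
              rw [← htr, Finset.mem_sdiff]
              refine ⟨pv_mem_starFS.mpr (show p < m by omega), ?_⟩
              rw [hre]
              intro hmem
              have h2 : p < p := pv_mem_starFS.mp hmem
              omega
            rw [hte, Finset.mem_singleton] at h1
            exact lf_ne_pv i _ h1.symm
          have hA'eq : A' = A.erase i := by
            refine Finset.Subset.antisymm ?_ ?_
            · intro i' hi'
              exact Finset.mem_erase.mpr ⟨fun he => hiA' (he ▸ hi'), hA'A hi'⟩
            · intro i' hi'
              rw [Finset.mem_erase] at hi'
              have h1 : lf i' ∉ t := by
                rw [hte, Finset.mem_singleton]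
                intro he
                exact hi'.1 (lf_inj he)
              have h2 : lf i' ∈ r := by
                rw [hr, Finset.mem_sdiff]
                exact ⟨lf_mem_starFS.mpr hi'.2, h1⟩
              rw [hre] at h2
              exact lf_mem_starFS.mp h2
          have hc1 : 1 ≤ A.card := Finset.card_pos.mpr ⟨i, hiA⟩
          have hcA' : A'.card = A.card - 1 := by
            rw [hA'eq, Finset.card_erase_of_mem hiA]
          rw [hte, csgGrundy_singleton _ (by rw [mem_L124]; tauto)]
          rw [hcr, hcA'] at hcrL
          rw [mem_L124] at hcrL
          simp only [sval]
          split_ifs <;> omega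
        · -- t is a path
          have hA2 : A ⊆ A' := by
            intro i hi
            by_contra hiA'
            have h2 : lf i ∉ r := by
              rw [hre, lf_mem_starFS]
              exact hiA'
            have h3 : lf i ∈ t := by
              rw [← htr, Finset.mem_sdiff]
              exact ⟨lf_mem_starFS.mpr hi, h2⟩
            rw [hte] at h3
            exact lf_not_mem_pathFS h3
          have hcA : A'.card = A.card := le_antisymm hA'3 (Finset.card_le_card hA2)
          have hct : t.card = (starFS k A m).card - r.card := by
            rw [← htr]
            exact Finset.card_sdiff_of_subset hrsub
          have hct2 : b'' - a'' = (1 + A.card + m) - r.card := by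
            rw [hte, pathFS_card hb''k] at hct
            rw [starFS_card hm] at hct
            exact hct
          rw [hte, grundy_path (b'' - a'') a'' b'' hb''k rfl]
          rw [hcr, hcA] at hcrL
          rw [mem_L124] at hcrL
          have hne'' : 0 < b'' - a'' := by omega
          simp only [sval]
          split_ifs <;> omega
        · -- t is a star: impossible, centre not in t
          refine absurd ?_ hctr_t
          rw [hte]
          exact ctr_mem_starFS
  · -- (II) witnesses
    intro m' hm'
    have wsuffix : ∀ d, (d = 1 ∨ d = 2) → d ≤ m →
        ∃ t, CsgMove (Gk k) ({1, 2, 4} : Set ℕ) (starFS k A m) t ∧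
          csgGrundy (Gk k) ({1, 2, 4} : Set ℕ) t = sval A.card (m - d) := by
      intro d hd hdm
      refine ⟨_, move_suffix A hm (by rw [mem_L124]; tauto) hdm, ?_⟩
      exact ih (A.card + (m - d)) (by omega) A (m - d) (by omega) rfl
    have wprefix : ∀ p, p ≤ m → 1 + A.card + p ∈ ({1, 2, 4} : Set ℕ) →
        ∃ t, CsgMove (Gk k) ({1, 2, 4} : Set ℕ) (starFS k A m) t ∧
          csgGrundy (Gk k) ({1, 2, 4} : Set ℕ) t = (m - p) % 3 := by
      intro p hp hcp
      exact ⟨_, move_prefix A hm hp hcp, grundy_path (m - p) p m hm rfl⟩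
    have wleaf : 1 ≤ A.card →
        ∃ t, CsgMove (Gk k) ({1, 2, 4} : Set ℕ) (starFS k A m) t ∧
          csgGrundy (Gk k) ({1, 2, 4} : Set ℕ) t = sval (A.card - 1) m := by
      intro hc
      obtain ⟨i, hi⟩ := Finset.card_pos.mp (show 0 < A.card by omega)
      refine ⟨_, move_leaf A hm hi, ?_⟩
      have := ih ((A.erase i).card + m)
        (by rw [Finset.card_erase_of_mem hi]; omega) (A.erase i) m hm rfl
      rw [this, Finset.card_erase_of_mem hi]
    rcases (by omega : A.card = 0 ∨ A.card = 1 ∨ A.card = 2 ∨ A.card = 3) with hc | hc | hc | hc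
    · -- c = 0 : v = (m+1) % 3
      rw [hc, sval0] at hm'
      rcases (by omega : m % 3 = 0 ∨ m % 3 = 1 ∨ m % 3 = 2) with h3 | h3 | h3
      · obtain ⟨t, ht, hg⟩ := wprefix 0 (by omega) (by rw [hc, mem_L124]; omega)
        refine ⟨t, ht, ?_⟩
        rw [hg]
        omega
      · rcases (by omega : m' = 0 ∨ m' = 1) with hm0 | hm0
        · obtain ⟨t, ht, hg⟩ := wprefix 1 (by omega) (by rw [hc, mem_L124]; omega)
          refine ⟨t, ht, ?_⟩
          rw [hg]
          omega
        · obtain ⟨t, ht, hg⟩ := wprefix 0 (by omega) (by rw [hc, mem_L124]; omega)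
          refine ⟨t, ht, ?_⟩
          rw [hg]
          omega
      · omega
    · -- c = 1 : v = (m+2) % 3
      rw [hc, sval1] at hm'
      rcases (by omega : m % 3 = 0 ∨ m % 3 = 1 ∨ m % 3 = 2) with h3 | h3 | h3
      · rcases (by omega : m' = 0 ∨ m' = 1) with hm0 | hm0
        · obtain ⟨t, ht, hg⟩ := wprefix 0 (by omega) (by rw [hc, mem_L124]; omega)
          refine ⟨t, ht, ?_⟩
          rw [hg]
          omega
        · obtain ⟨t, ht, hg⟩ := wleaf (by omega)
          refine ⟨t, ht, ?_⟩
          rw [hg, hc]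
          show sval 0 m = m'
          rw [sval0]
          omega
      · omega
      · have hm0 : m' = 0 := by omega
        obtain ⟨t, ht, hg⟩ := wsuffix 1 (by omega) (by omega)
        refine ⟨t, ht, ?_⟩
        rw [hg, hc, sval1]
        omega
    · -- c = 2 : v = m % 3
      rw [hc, sval2] at hm'
      rcases (by omega : m % 3 = 0 ∨ m % 3 = 1 ∨ m % 3 = 2) with h3 | h3 | h3
      · omega
      · have hm0 : m' = 0 := by omega
        obtain ⟨t, ht, hg⟩ := wsuffix 1 (by omega) (by omega)
        refine ⟨t, ht, ?_⟩
        rw [hg, hc, sval2]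
        omega
      · rcases (by omega : m' = 0 ∨ m' = 1) with hm0 | hm0
        · obtain ⟨t, ht, hg⟩ := wsuffix 2 (by omega) (by omega)
          refine ⟨t, ht, ?_⟩
          rw [hg, hc, sval2]
          omega
        · obtain ⟨t, ht, hg⟩ := wsuffix 1 (by omega) (by omega)
          refine ⟨t, ht, ?_⟩
          rw [hg, hc, sval2]
          omega
    · -- c = 3
      rw [hc, sval3] at hm'
      rcases (by omega : m % 3 = 0 ∨ m % 3 = 1 ∨ m % 3 = 2) with h3 | h3 | h3
      · rw [if_pos h3] at hm'
        have hm0 : m' = 0 := by omega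
        obtain ⟨t, ht, hg⟩ := wprefix 0 (by omega) (by rw [hc, mem_L124]; omega)
        refine ⟨t, ht, ?_⟩
        rw [hg]
        omega
      · rw [if_neg (by omega), if_pos h3] at hm'
        omega
      · rw [if_neg (by omega), if_neg (by omega)] at hm'
        rcases (by omega : m' = 0 ∨ m' = 1 ∨ m' = 2) with hm0 | hm0 | hm0
        · obtain ⟨t, ht, hg⟩ := wsuffix 1 (by omega) (by omega)
          refine ⟨t, ht, ?_⟩
          rw [hg, hc, sval3]
          split_ifs <;> omega
        · obtain ⟨t, ht, hg⟩ := wsuffix 2 (by omega) (by omega)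
          refine ⟨t, ht, ?_⟩
          rw [hg, hc, sval3]
          split_ifs <;> omega
        · obtain ⟨t, ht, hg⟩ := wprefix 0 (by omega) (by rw [hc, mem_L124]; omega)
          refine ⟨t, ht, ?_⟩
          rw [hg]
          omega

/-- For CSG({1,2,4}), the Grundy value of S(1,1,1,k) is 1, 0, 3 according to
k ≡ 0, 1, 2 mod 3. -/
theorem stmt18 (k : ℕ) :
    csgGrundy (subdividedStar ![1, 1, 1, k]) ({1, 2, 4} : Set ℕ) Finset.univ =
      if k % 3 = 0 then 1 else if k % 3 = 1 then 0 else 3 := by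
  have h1 : (Finset.univ : Finset (Vk k)) = starFS k Finset.univ k := univ_eq_starFS
  show csgGrundy (Gk k) ({1, 2, 4} : Set ℕ) Finset.univ = _
  rw [h1, grundy_star (Finset.univ.card + k) Finset.univ k le_rfl rfl]
  have hcard : (Finset.univ : Finset (Fin 3)).card = 3 := by simp
  rw [hcard]
  simp only [sval]
  norm_num
end

section
/- For the game CSG({1,2,4}) on subdivided stars, appending 3 extra vertices to any branch does not change the Grundy value: for all m ≥ 0, t ≥ 0 and ℓ₁,...,ℓ_t ≥ 0, the Grundy value of S(ℓ₁,...,ℓ_t, m+3) equals the Grundy value of S(ℓ₁,...,ℓ_t, m). -/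
open SimpleGraph

namespace CSG19
set_option synthInstance.maxSize 1000
set_option synthInstance.maxHeartbeats 1000000
set_option maxHeartbeats 1600000

open Finset SimpleGraph

/-! ### The value table -/

def fT : ℕ → ℕ → ℕ
  | 0, 0 => 1 | 0, 1 => 0 | 0, 2 => 2 | 0, 3 => 1 | 0, 4 => 0 | 0, 5 => 2
  | 1, 0 => 2 | 1, 1 => 1 | 1, 2 => 0 | 1, 3 => 2 | 1, 4 => 1 | 1, 5 => 3
  | 2, 0 => 0 | 2, 1 => 2 | 2, 2 => 1 | 2, 3 => 3 | 2, 4 => 0 | 2, 5 => 2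
  | 3, 0 => 1 | 3, 1 => 3 | 3, 2 => 0 | 3, 3 => 2 | 3, 4 => 1 | 3, 5 => 3
  | _, _ => 0

def capA (n : ℕ) : ℕ := if n < 4 then n else 2 + n % 2
def capB (n : ℕ) : ℕ := if n < 6 then n else 4 + n % 2

def fval (a b : ℕ) : ℕ := fT (capA a) (capB b)

lemma capA_lt (n : ℕ) : capA n < 4 := by simp only [capA]; split_ifs <;> omega
lemma capB_lt (n : ℕ) : capB n < 6 := by simp only [capB]; split_ifs <;> omega

def stepA (x : ℕ) : ℕ := if x = 3 then 2 else x + 1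
def stepB (x : ℕ) : ℕ := if x = 5 then 4 else x + 1

lemma capA_succ (n : ℕ) : capA (n + 1) = stepA (capA n) := by
  simp only [capA, stepA]; split_ifs <;> omega
lemma capB_succ (n : ℕ) : capB (n + 1) = stepB (capB n) := by
  simp only [capB, stepB]; split_ifs <;> omega

lemma fval_lt (a b : ℕ) : fval a b < 4 :=
  (by decide : ∀ x < 4, ∀ y < 6, fT x y < 4) _ (capA_lt a) _ (capB_lt b)

lemma fne1 (a b : ℕ) : fval (a + 1) b ≠ fval a b := by
  unfold fval; rw [capA_succ]
  exact (by decide : ∀ x < 4, ∀ y < 6, fT (stepA x) y ≠ fT x y) _ (capA_lt a) _ (capB_lt b)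

lemma fne2 (a b : ℕ) : fval a (b + 1) ≠ fval a b := by
  unfold fval; rw [capB_succ]
  exact (by decide : ∀ x < 4, ∀ y < 6, fT x (stepB y) ≠ fT x y) _ (capA_lt a) _ (capB_lt b)

lemma fne3 (a b : ℕ) : fval (a + 1) b ≠ fval a (b + 1) := by
  unfold fval; rw [capA_succ, capB_succ]
  exact (by decide : ∀ x < 4, ∀ y < 6, fT (stepA x) y ≠ fT x (stepB y)) _ (capA_lt a) _ (capB_lt b)



/-! ### rep lemmas -/

def repA (n : ℕ) : ℕ := if n < 6 then n else 4 + n % 2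
def repB (n : ℕ) : ℕ := if n < 8 then n else 6 + n % 2

lemma capA_repA (n : ℕ) : capA (repA n) = capA n := by
  simp only [capA, repA]; split_ifs <;> omega
lemma capA_repA_succ (n : ℕ) : capA (repA n + 1) = capA (n + 1) := by
  simp only [capA, repA]; split_ifs <;> omega
lemma capA_repA_pred (n : ℕ) : capA (repA n - 1) = capA (n - 1) := by
  simp only [capA, repA]; split_ifs <;> omega
lemma capB_repB (n : ℕ) : capB (repB n) = capB n := by
  simp only [capB, repB]; split_ifs <;> omega
lemma capB_repB_succ (n : ℕ) : capB (repB n + 1) = capB (n + 1) := by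
  simp only [capB, repB]; split_ifs <;> omega
lemma capB_repB_pred (n : ℕ) : capB (repB n - 1) = capB (n - 1) := by
  simp only [capB, repB]; split_ifs <;> omega
lemma repA_lt (n : ℕ) : repA n < 8 := by simp only [repA]; split_ifs <;> omega
lemma repB_lt (n : ℕ) : repB n < 10 := by simp only [repB]; split_ifs <;> omega
lemma repA_zero (n : ℕ) : repA n = 0 ↔ n = 0 := by simp only [repA]; split_ifs <;> omega
lemma repA_one (n : ℕ) : repA n = 1 ↔ n = 1 := by simp only [repA]; split_ifs <;> omega
lemma repB_zero (n : ℕ) : repB n = 0 ↔ n = 0 := by simp only [repB]; split_ifs <;> omega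

/-! ### arithmetic inequality lemmas -/

lemma trim_ineq (k1 k2 a d : ℕ) (hd : d = 1 ∨ d = 2 ∨ d = 4) (hda : d ≤ a) :
    fval (k1 + (if (a - d) % 3 = 1 then 1 else 0)) (k2 + (if (a - d) % 3 = 2 then 1 else 0))
      ≠ fval (k1 + (if a % 3 = 1 then 1 else 0)) (k2 + (if a % 3 = 2 then 1 else 0)) := by
  have h : (a % 3 = 0 ∧ (a-d) % 3 = 1) ∨ (a % 3 = 0 ∧ (a-d) % 3 = 2)
    ∨ (a % 3 = 1 ∧ (a-d) % 3 = 0) ∨ (a % 3 = 1 ∧ (a-d) % 3 = 2)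
    ∨ (a % 3 = 2 ∧ (a-d) % 3 = 0) ∨ (a % 3 = 2 ∧ (a-d) % 3 = 1) := by omega
  rcases h with ⟨h1, h2⟩ | ⟨h1, h2⟩ | ⟨h1, h2⟩ | ⟨h1, h2⟩ | ⟨h1, h2⟩ | ⟨h1, h2⟩ <;>
    rw [h1, h2] <;> norm_num
  · exact fne1 k1 k2
  · exact fne2 k1 k2
  · exact (fne1 k1 k2).symm
  · exact (fne3 k1 k2).symm
  · exact (fne2 k1 k2).symm
  · exact fne3 k1 k2

lemma center_ineq (k1 k2 z3 p cj : ℕ)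
    (h : 1 + (k1 + 2*k2 + 3*z3) + p = 1 ∨ 1 + (k1 + 2*k2 + 3*z3) + p = 2 ∨
         1 + (k1 + 2*k2 + 3*z3) + p = 4)
    (hpc : p ≤ cj) :
    fval (k1 + (if cj % 3 = 1 then 1 else 0)) (k2 + (if cj % 3 = 2 then 1 else 0))
      ≠ (cj - p) % 3 := by
  have key : ∀ k1 < 4, ∀ k2 < 2, ∀ z3 < 2, ∀ p < 4, ∀ r < 3,
      ¬(1 + (k1 + 2*k2 + 3*z3) + p = 1 ∨ 1 + (k1 + 2*k2 + 3*z3) + p = 2 ∨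
        1 + (k1 + 2*k2 + 3*z3) + p = 4) ∨
      fval (k1 + (if r = 1 then 1 else 0)) (k2 + (if r = 2 then 1 else 0))
        ≠ (r + 3 - p) % 3 := by decide
  have h1 : (cj - p) % 3 = (cj % 3 + 3 - p) % 3 := by omega
  rw [h1]
  exact (key k1 (by omega) k2 (by omega) z3 (by omega) p (by omega) (cj % 3)
    (by omega)).resolve_left (not_not_intro h)

lemma whole_ineq (k1 k2 z3 : ℕ)
    (h : 1 + (k1 + 2*k2 + 3*z3) = 1 ∨ 1 + (k1 + 2*k2 + 3*z3) = 2 ∨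
         1 + (k1 + 2*k2 + 3*z3) = 4) :
    fval k1 k2 ≠ 0 := by
  have key : ∀ k1 < 4, ∀ k2 < 2, ∀ z3 < 2,
      ¬(1 + (k1 + 2*k2 + 3*z3) = 1 ∨ 1 + (k1 + 2*k2 + 3*z3) = 2 ∨
        1 + (k1 + 2*k2 + 3*z3) = 4) ∨ fval k1 k2 ≠ 0 := by decide
  exact (key k1 (by omega) k2 (by omega) z3 (by omega)).resolve_left (not_not_intro h)

lemma fval_rep (a b : ℕ) : fval (repA a) (repB b) = fval a b := by
  unfold fval; rw [capA_repA, capB_repB]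

lemma recipe (n1 n2 w : ℕ) (z : Bool) (hw : w < fval n1 n2) :
    (1 ≤ n1 ∧ w = fval (n1-1) n2)
  ∨ (1 ≤ n2 ∧ w = fval (n1+1) (n2-1))
  ∨ (1 ≤ n2 ∧ w = fval n1 (n2-1))
  ∨ (z = true ∧ w = fval n1 (n2+1))
  ∨ (z = true ∧ w = fval (n1+1) n2)
  ∨ (n1 = 1 ∧ n2 = 0 ∧ z = false ∧ w = 0)
  ∨ (n1 = 0 ∧ n2 = 0 ∧ z = false ∧ w = 0) := by
  have key : ∀ a < 8, ∀ b < 10, ∀ w < 4, ∀ z : Bool, ¬(w < fval a b) ∨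
      ((1 ≤ a ∧ w = fval (a-1) b)
    ∨ (1 ≤ b ∧ w = fval (a+1) (b-1))
    ∨ (1 ≤ b ∧ w = fval a (b-1))
    ∨ (z = true ∧ w = fval a (b+1))
    ∨ (z = true ∧ w = fval (a+1) b)
    ∨ (a = 1 ∧ b = 0 ∧ z = false ∧ w = 0)
    ∨ (a = 0 ∧ b = 0 ∧ z = false ∧ w = 0)) := by decide
  have hww : w < 4 := lt_trans hw (fval_lt n1 n2)
  have h0 := (key (repA n1) (repA_lt n1) (repB n2) (repB_lt n2) w hww z).resolve_left
    (not_not_intro (by rwa [fval_rep]))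
  have e1 : fval (repA n1 - 1) (repB n2) = fval (n1-1) n2 := by
    unfold fval; rw [capA_repA_pred, capB_repB]
  have e2 : fval (repA n1 + 1) (repB n2 - 1) = fval (n1+1) (n2-1) := by
    unfold fval; rw [capA_repA_succ, capB_repB_pred]
  have e3 : fval (repA n1) (repB n2 - 1) = fval n1 (n2-1) := by
    unfold fval; rw [capA_repA, capB_repB_pred]
  have e4 : fval (repA n1) (repB n2 + 1) = fval n1 (n2+1) := by
    unfold fval; rw [capA_repA, capB_repB_succ]
  have e5 : fval (repA n1 + 1) (repB n2) = fval (n1+1) n2 := by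
    unfold fval; rw [capA_repA_succ, capB_repB]
  rcases h0 with ⟨h, he⟩ | ⟨h, he⟩ | ⟨h, he⟩ | ⟨h, he⟩ | ⟨h, he⟩ | ⟨h1, h2, h3, h4⟩ | ⟨h1, h2, h3, h4⟩
  · exact Or.inl ⟨by have := (repA_zero n1); omega, by rw [he, e1]⟩
  · exact Or.inr (Or.inl ⟨by have := (repB_zero n2); omega, by rw [he, e2]⟩)
  · exact Or.inr (Or.inr (Or.inl ⟨by have := (repB_zero n2); omega, by rw [he, e3]⟩))
  · exact Or.inr (Or.inr (Or.inr (Or.inl ⟨h, by rw [he, e4]⟩)))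
  · exact Or.inr (Or.inr (Or.inr (Or.inr (Or.inl ⟨h, by rw [he, e5]⟩))))
  · exact Or.inr (Or.inr (Or.inr (Or.inr (Or.inr (Or.inl
      ⟨(repA_one n1).mp h1, (repB_zero n2).mp h2, h3, h4⟩)))))
  · exact Or.inr (Or.inr (Or.inr (Or.inr (Or.inr (Or.inr
      ⟨(repA_zero n1).mp h1, (repB_zero n2).mp h2, h3, h4⟩)))))

lemma path_ineq (c d : ℕ) (hd : d = 1 ∨ d = 2 ∨ d = 4) (hdc : d ≤ c) :
    (c - d) % 3 ≠ c % 3 := by omega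



/-! ### Graph infrastructure -/

open Finset SimpleGraph

section Graph
variable {t : ℕ} {l : Fin t → ℕ}

abbrev SV (l : Fin t → ℕ) := Option (Σ i : Fin t, Fin (l i))

lemma someSigma_inj {i i' : Fin t} {j : Fin (l i)} {j' : Fin (l i')}
    (h : (some ⟨i, j⟩ : SV l) = some ⟨i', j'⟩) : i = i' ∧ (j : ℕ) = (j' : ℕ) := by
  injection h with h1
  injection h1 with ha hb
  subst ha
  exact ⟨rfl, by rw [eq_of_heq hb]⟩

lemma someSigma_eq {i i' : Fin t} {j : Fin (l i)} {j' : Fin (l i')}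
    (h1 : i = i') (h2 : (j : ℕ) = (j' : ℕ)) : (some ⟨i, j⟩ : SV l) = some ⟨i', j'⟩ := by
  subst h1; exact congrArg _ (congrArg _ (Fin.ext h2))

lemma adj_elim {u v : SV l} (h : (subdividedStar l).Adj u v) :
    (∃ i : Fin t, ∃ j : Fin (l i), (j : ℕ) = 0 ∧
      ((u = none ∧ v = some ⟨i, j⟩) ∨ (v = none ∧ u = some ⟨i, j⟩)))
  ∨ (∃ i : Fin t, ∃ j j' : Fin (l i), (j : ℕ) + 1 = (j' : ℕ) ∧
      ((u = some ⟨i, j⟩ ∧ v = some ⟨i, j'⟩) ∨ (v = some ⟨i, j⟩ ∧ u = some ⟨i, j'⟩))) := by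
  rw [subdividedStar, SimpleGraph.fromRel_adj] at h
  obtain ⟨hne, h | h⟩ := h
  · match u, v with
    | none, none => exact absurd rfl hne
    | none, some ⟨i, j⟩ => exact Or.inl ⟨i, j, h, Or.inl ⟨rfl, rfl⟩⟩
    | some ⟨i, j⟩, none => exact h.elim
    | some ⟨i, j⟩, some ⟨i', j'⟩ =>
      obtain ⟨h1, h2⟩ := h
      have hii : i = i' := Fin.val_injective h1
      subst hii
      exact Or.inr ⟨i, j, j', h2, Or.inl ⟨rfl, rfl⟩⟩
  · match u, v with
    | none, none => exact absurd rfl hne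
    | some ⟨i, j⟩, none => exact Or.inl ⟨i, j, h, Or.inr ⟨rfl, rfl⟩⟩
    | none, some ⟨i, j⟩ => exact h.elim
    | some ⟨i, j⟩, some ⟨i', j'⟩ =>
      obtain ⟨h1, h2⟩ := h
      have hii : i' = i := Fin.val_injective h1
      subst hii
      exact Or.inr ⟨i', j', j, h2, Or.inr ⟨rfl, rfl⟩⟩

lemma adj_none_some {i : Fin t} {j : Fin (l i)} (hj : (j : ℕ) = 0) :
    (subdividedStar l).Adj none (some ⟨i, j⟩) := by
  rw [subdividedStar, SimpleGraph.fromRel_adj]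
  exact ⟨by simp, Or.inl hj⟩

lemma adj_succ {i : Fin t} {j j' : Fin (l i)} (hj : (j : ℕ) + 1 = (j' : ℕ)) :
    (subdividedStar l).Adj (some ⟨i, j⟩) (some ⟨i, j'⟩) := by
  rw [subdividedStar, SimpleGraph.fromRel_adj]
  refine ⟨fun hh => ?_, Or.inl ⟨rfl, hj⟩⟩
  obtain ⟨-, hv⟩ := someSigma_inj hh
  omega

/-! ### membership, counts -/

def msome (s : Finset (SV l)) (i : Fin t) (m : ℕ) : Prop :=
  ∃ jf : Fin (l i), (jf : ℕ) = m ∧ some ⟨i, jf⟩ ∈ s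

def brSet (s : Finset (SV l)) (i : Fin t) : Finset (Fin (l i)) :=
  univ.filter (fun j => some ⟨i, j⟩ ∈ s)

def cnt (s : Finset (SV l)) (i : Fin t) : ℕ := (brSet s i).card

def brN (s : Finset (SV l)) (i : Fin t) : Finset ℕ := (brSet s i).image Fin.val

lemma mem_brN {s : Finset (SV l)} {i : Fin t} {m : ℕ} : m ∈ brN s i ↔ msome s i m := by
  simp only [brN, brSet, Finset.mem_image, Finset.mem_filter, Finset.mem_univ, true_and, msome]
  constructor
  · rintro ⟨j, hj, rfl⟩; exact ⟨j, rfl, hj⟩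
  · rintro ⟨j, rfl, hj⟩; exact ⟨j, hj, rfl⟩

lemma card_brN {s : Finset (SV l)} {i : Fin t} : (brN s i).card = cnt s i :=
  Finset.card_image_of_injective _ Fin.val_injective

lemma cnt_le {s : Finset (SV l)} {i : Fin t} : cnt s i ≤ l i := by
  have := Finset.card_filter_le (univ : Finset (Fin (l i))) (fun j => some ⟨i, j⟩ ∈ s)
  simpa [cnt, brSet] using this

lemma msome_lt {s : Finset (SV l)} {i : Fin t} {m : ℕ} (h : msome s i m) : m < l i := by
  obtain ⟨j, rfl, -⟩ := h; exact j.2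

def PC (s : Finset (SV l)) : Prop :=
  ∀ (i : Fin t) (j k : Fin (l i)), some ⟨i, j⟩ ∈ s → (k : ℕ) ≤ (j : ℕ) → some ⟨i, k⟩ ∈ s

lemma nat_downset {T : Finset ℕ} (h : ∀ a ∈ T, ∀ b < a, b ∈ T) : T = Finset.range T.card := by
  have h1 : ∀ a ∈ T, a < T.card := by
    intro a ha
    by_contra hc
    have hsub : Finset.range (a + 1) ⊆ T := by
      intro b hb
      rw [Finset.mem_range] at hb
      rcases Nat.lt_or_ge b a with hb' | hb'
      · exact h a ha b hb'
      · have : b = a := by omega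
        subst this; exact ha
    have := Finset.card_le_card hsub
    simp [Finset.card_range] at this
    omega
  have hsub : T ⊆ Finset.range T.card := fun a ha => Finset.mem_range.mpr (h1 a ha)
  exact Finset.eq_of_subset_of_card_le hsub (by simp)

lemma msome_iff_lt_cnt {s : Finset (SV l)} (hPC : PC s) (i : Fin t) (m : ℕ) :
    msome s i m ↔ m < cnt s i := by
  have hd : ∀ a ∈ brN s i, ∀ b < a, b ∈ brN s i := by
    intro a ha b hb
    rw [mem_brN] at ha ⊢
    obtain ⟨j, rfl, hj⟩ := ha
    refine ⟨⟨b, by omega⟩, rfl, hPC i j ⟨b, by omega⟩ hj (by simp; omega)⟩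
  have := nat_downset hd
  rw [← mem_brN, this, Finset.mem_range, card_brN]

lemma cnt_of_interval {s : Finset (SV l)} {i : Fin t} {a b : ℕ}
    (h : ∀ m, msome s i m ↔ (a ≤ m ∧ m < b)) : cnt s i = b - a := by
  have : brN s i = Finset.Ico a b := by
    ext m; rw [mem_brN, h m, Finset.mem_Ico]
  rw [← card_brN, this, Nat.card_Ico]

lemma cnt_of_empty {s : Finset (SV l)} {i : Fin t}
    (h : ∀ m, ¬ msome s i m) : cnt s i = 0 := by
  have : brN s i = ∅ := by
    ext m; simp [mem_brN, h m]
  rw [← card_brN, this, Finset.card_empty]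

lemma mem_msome {s : Finset (SV l)} {i : Fin t} {j : Fin (l i)} (h : some ⟨i, j⟩ ∈ s) :
    msome s i (j : ℕ) := ⟨j, rfl, h⟩

/-! ### total cardinality decomposition -/

lemma cardDecomp (s : Finset (SV l)) :
    s.card = (if none ∈ s then 1 else 0) + ∑ i, cnt s i := by
  classical
  have h0 := Finset.card_eq_sum_card_fiberwise
    (f := fun v : SV l => Option.map Sigma.fst v) (s := s) (t := Finset.univ)
    (fun x _ => Finset.mem_univ _)
  rw [h0, Fintype.sum_option]
  congr 1
  · have : s.filter (fun v => Option.map Sigma.fst v = none) = s.filter (fun v => v = none) := by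
      apply Finset.filter_congr
      intro v _
      simp [Option.map_eq_none_iff]
    rw [this]
    convert congrArg Finset.card (Finset.filter_eq' s (none : SV l)) using 1
    split <;> simp
  · apply Finset.sum_congr rfl
    intro i _
    have himg : s.filter (fun v => Option.map Sigma.fst v = some i)
        = (brSet s i).image (fun j => (some ⟨i, j⟩ : SV l)) := by
      ext v
      simp only [Finset.mem_filter, Finset.mem_image, brSet, Finset.mem_univ, true_and]
      constructor
      · rintro ⟨hv, hφ⟩
        match v with
        | none => simp at hφ
        | some ⟨i', j⟩ =>
          simp only [Option.map_some, Option.some.injEq] at hφ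
          subst hφ
          exact ⟨j, hv, rfl⟩
      · rintro ⟨j, hj, rfl⟩
        exact ⟨hj, rfl⟩
    rw [himg, Finset.card_image_of_injective]
    · rfl
    · intro j j' hjj
      exact Fin.ext (someSigma_inj hjj).2

lemma brSet_sdiff {s u : Finset (SV l)} {i : Fin t} :
    brSet (s \ u) i = brSet s i \ brSet u i := by
  ext j; simp [brSet, Finset.mem_sdiff]

lemma brSet_subset {s u : Finset (SV l)} (h : u ⊆ s) (i : Fin t) :
    brSet u i ⊆ brSet s i := by
  intro j hj
  simp only [brSet, Finset.mem_filter, Finset.mem_univ, true_and] at hj ⊢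
  exact h hj

lemma cnt_mono {s u : Finset (SV l)} (h : u ⊆ s) (i : Fin t) : cnt u i ≤ cnt s i :=
  Finset.card_le_card (brSet_subset h i)

lemma cnt_sdiff {s u : Finset (SV l)} (h : u ⊆ s) (i : Fin t) :
    cnt (s \ u) i = cnt s i - cnt u i := by
  rw [cnt, brSet_sdiff, Finset.card_sdiff_of_subset (brSet_subset h i)]
  rfl

end Graph


/-! ### Connectivity: crossing lemmas -/

section Conn
variable {t : ℕ} {l : Fin t → ℕ}

lemma induce_adj' {s : Set (SV l)} {u v : ↥s} (h : ((subdividedStar l).induce s).Adj u v) :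
    (subdividedStar l).Adj u.1 v.1 := by
  simpa using h

lemma induce_adj_mk {s : Set (SV l)} {a b : SV l} (ha : a ∈ s) (hb : b ∈ s)
    (h : (subdividedStar l).Adj a b) :
    ((subdividedStar l).induce s).Adj ⟨a, ha⟩ ⟨b, hb⟩ := by
  simpa using h

lemma crossK {s : Finset (SV l)} {i : Fin t} {k : ℕ} :
    ∀ {u v : (↑s : Set (SV l))} (_ : ((subdividedStar l).induce (↑s : Set (SV l))).Walk u v),
      (∃ j : Fin (l i), k < (j : ℕ) ∧ u.1 = some ⟨i, j⟩) →
      (∀ j : Fin (l i), v.1 = some ⟨i, j⟩ → (j : ℕ) ≤ k) →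
      msome s i k := by
  intro u v p
  induction p with
  | nil =>
    rintro ⟨j, hj, hu⟩ hv
    exact absurd (hv j hu) (by omega)
  | @cons a b c hadj p ih =>
    rintro ⟨j, hj, hu⟩ hv
    by_cases hb : ∃ j' : Fin (l i), k < (j' : ℕ) ∧ b.1 = some ⟨i, j'⟩
    · exact ih hb hv
    · have hG := induce_adj' hadj
      rcases adj_elim hG with ⟨i2, j2, hj2, ⟨ha, hb'⟩ | ⟨hb', ha⟩⟩ |
        ⟨i2, j2, j2', hsucc, ⟨ha, hb'⟩ | ⟨hb', ha⟩⟩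
      · rw [hu] at ha; exact absurd ha (by simp)
      · -- a.1 = some ⟨i2, j2⟩ with j2 = 0, b.1 = none
        rw [hu] at ha
        obtain ⟨rfl, hval⟩ := someSigma_inj ha
        omega
      · -- a.1 = some ⟨i2,j2⟩, b.1 = some ⟨i2,j2'⟩, j2+1 = j2'
        rw [hu] at ha
        obtain ⟨rfl, hval⟩ := someSigma_inj ha
        exact absurd ⟨j2', by omega, hb'⟩ hb
      · -- b.1 = some ⟨i2,j2⟩, a.1 = some ⟨i2,j2'⟩, j2+1 = j2'
        rw [hu] at ha
        obtain ⟨rfl, hval⟩ := someSigma_inj ha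
        have hj2k : (j2 : ℕ) ≤ k := by
          by_contra hcon
          exact hb ⟨j2, by omega, hb'⟩
        have : (j2 : ℕ) = k := by omega
        exact ⟨j2, this, by rw [← hb']; exact Finset.mem_coe.mp b.2⟩

lemma cross0 {s : Finset (SV l)} {i : Fin t} :
    ∀ {u v : (↑s : Set (SV l))} (_ : ((subdividedStar l).induce (↑s : Set (SV l))).Walk u v),
      (∃ j : Fin (l i), u.1 = some ⟨i, j⟩) →
      (∀ j : Fin (l i), v.1 ≠ some ⟨i, j⟩) →
      none ∈ s := by
  intro u v p
  induction p with
  | nil =>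
    rintro ⟨j, hu⟩ hv
    exact absurd hu (hv j)
  | @cons a b c hadj p ih =>
    rintro ⟨j, hu⟩ hv
    by_cases hb : ∃ j' : Fin (l i), b.1 = some ⟨i, j'⟩
    · exact ih hb hv
    · have hG := induce_adj' hadj
      rcases adj_elim hG with ⟨i2, j2, hj2, ⟨ha, hb'⟩ | ⟨hb', ha⟩⟩ |
        ⟨i2, j2, j2', hsucc, ⟨ha, hb'⟩ | ⟨hb', ha⟩⟩
      · rw [hu] at ha; exact absurd ha (by simp)
      · rw [← hb']; exact Finset.mem_coe.mp b.2
      · rw [hu] at ha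
        obtain ⟨rfl, hval⟩ := someSigma_inj ha
        exact absurd ⟨j2', hb'⟩ hb
      · rw [hu] at ha
        obtain ⟨rfl, hval⟩ := someSigma_inj ha
        exact absurd ⟨j2, hb'⟩ hb

/-! ### Characterization of connected sets -/

lemma conn_center {s : Finset (SV l)} (h : ConnOn (subdividedStar l) ↑s)
    (hc : none ∈ s) : PC s := by
  intro i j kf hj hk
  rcases Nat.eq_or_lt_of_le hk with heq | hlt
  · rwa [Fin.ext heq]
  · have hreach := h.preconnected ⟨some ⟨i, j⟩, Finset.mem_coe.mpr hj⟩
      ⟨none, Finset.mem_coe.mpr hc⟩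
    obtain ⟨jf, hjf, hmem⟩ := hreach.elim fun p =>
      crossK (k := (kf : ℕ)) p ⟨j, hlt, rfl⟩ (fun j' h' => by simp at h')
    rwa [← Fin.ext hjf]

lemma conn_branch {s : Finset (SV l)} (h : ConnOn (subdividedStar l) ↑s)
    (hn : none ∉ s) {i i' : Fin t} {j : Fin (l i)} {j' : Fin (l i')}
    (hm : some ⟨i, j⟩ ∈ s) (hm' : some ⟨i', j'⟩ ∈ s) : i = i' := by
  by_contra hne
  have hreach := h.preconnected ⟨some ⟨i, j⟩, Finset.mem_coe.mpr hm⟩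
    ⟨some ⟨i', j'⟩, Finset.mem_coe.mpr hm'⟩
  exact hn (hreach.elim fun p => cross0 p ⟨j, rfl⟩
    (fun j2 h2 => hne (someSigma_inj h2).1.symm))

lemma conn_between {s : Finset (SV l)} (h : ConnOn (subdividedStar l) ↑s)
    {i : Fin t} {ja jb : Fin (l i)} (ha : some ⟨i, ja⟩ ∈ s) (hb : some ⟨i, jb⟩ ∈ s)
    {m : ℕ} (h1 : (ja : ℕ) ≤ m) (h2 : m < (jb : ℕ)) : msome s i m := by
  have hreach := h.preconnected ⟨some ⟨i, jb⟩, Finset.mem_coe.mpr hb⟩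
    ⟨some ⟨i, ja⟩, Finset.mem_coe.mpr ha⟩
  exact hreach.elim fun p => crossK p ⟨jb, h2, rfl⟩
    (fun j' h' => by rw [(someSigma_inj h').2] at h1; omega)

/-! ### Construction of connected sets -/

lemma connA {s : Finset (SV l)} (hc : none ∈ s) (hPC : PC s) :
    ConnOn (subdividedStar l) ↑s := by
  have hkey : ∀ (n : ℕ) (i : Fin t) (j : Fin (l i)) (hm : some ⟨i, j⟩ ∈ s), (j : ℕ) ≤ n →
      ((subdividedStar l).induce (↑s : Set (SV l))).Reachable
        ⟨some ⟨i, j⟩, Finset.mem_coe.mpr hm⟩ ⟨none, Finset.mem_coe.mpr hc⟩ := by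
    intro n
    induction n with
    | zero =>
      intro i j hm hj
      exact (induce_adj_mk _ _ ((adj_none_some (by omega)).symm)).reachable
    | succ n ih =>
      intro i j hm hj
      rcases Nat.lt_or_ge (j : ℕ) (n + 1) with hlt | hge
      · exact ih i j hm (by omega)
      · have hjn : (j : ℕ) = n + 1 := by omega
        have hn : n < l i := by omega
        have hmem' : some ⟨i, ⟨n, hn⟩⟩ ∈ s := hPC i j ⟨n, hn⟩ hm (by simp; omega)
        have hadj : ((subdividedStar l).induce (↑s : Set (SV l))).Adj
            ⟨some ⟨i, j⟩, Finset.mem_coe.mpr hm⟩ ⟨some ⟨i, ⟨n, hn⟩⟩, Finset.mem_coe.mpr hmem'⟩ :=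
          induce_adj_mk _ _ ((adj_succ (by simp [hjn])).symm)
        exact hadj.reachable.trans (ih i ⟨n, hn⟩ hmem' (by simp))
  have hto : ∀ v : (↑s : Set (SV l)), ((subdividedStar l).induce (↑s : Set (SV l))).Reachable
      v ⟨none, Finset.mem_coe.mpr hc⟩ := by
    rintro ⟨v, hv⟩
    match v with
    | none => rfl
    | some ⟨i, j⟩ => exact hkey (j : ℕ) i j (Finset.mem_coe.mp hv) le_rfl
  have hne : Nonempty (↑s : Set (SV l)) := ⟨⟨none, Finset.mem_coe.mpr hc⟩⟩
  exact SimpleGraph.Connected.mk (fun u v => (hto u).trans (hto v).symm)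

lemma connB {s : Finset (SV l)} {i₀ : Fin t} {a b : ℕ} (hab : a < b)
    (hmem : ∀ m, a ≤ m → m < b → msome s i₀ m)
    (hshape : ∀ v ∈ s, ∃ j : Fin (l i₀), v = some ⟨i₀, j⟩ ∧ a ≤ (j : ℕ) ∧ (j : ℕ) < b) :
    ConnOn (subdividedStar l) ↑s := by
  obtain ⟨ja, hja, hmema⟩ := hmem a le_rfl hab
  have hkey : ∀ (n : ℕ) (j : Fin (l i₀)) (hm : some ⟨i₀, j⟩ ∈ s), (j : ℕ) ≤ a + n →
      ((subdividedStar l).induce (↑s : Set (SV l))).Reachable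
        ⟨some ⟨i₀, j⟩, Finset.mem_coe.mpr hm⟩ ⟨some ⟨i₀, ja⟩, Finset.mem_coe.mpr hmema⟩ := by
    intro n
    induction n with
    | zero =>
      intro j hm hj
      have hjge : a ≤ (j : ℕ) := by
        obtain ⟨j', hj', hge, -⟩ := hshape _ hm
        rw [(someSigma_inj hj').2]; exact hge
      have : j = ja := Fin.ext (by omega)
      subst this
      rfl
    | succ n ih =>
      intro j hm hj
      rcases Nat.lt_or_ge (j : ℕ) (a + n + 1) with hlt | hge
      · exact ih j hm (by omega)
      · have hjn : (j : ℕ) = a + n + 1 := by omega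
        have hjb : (j : ℕ) < b := by
          obtain ⟨j', hj', -, hlt'⟩ := hshape _ hm
          rw [(someSigma_inj hj').2]; exact hlt'
        obtain ⟨j', hj', hmem'⟩ := hmem (a + n) (by omega) (by omega)
        have hadj : ((subdividedStar l).induce (↑s : Set (SV l))).Adj
            ⟨some ⟨i₀, j⟩, Finset.mem_coe.mpr hm⟩ ⟨some ⟨i₀, j'⟩, Finset.mem_coe.mpr hmem'⟩ :=
          induce_adj_mk _ _ ((adj_succ (by omega)).symm)
        exact hadj.reachable.trans (ih j' hmem' (by omega))
  have hto : ∀ v : (↑s : Set (SV l)), ((subdividedStar l).induce (↑s : Set (SV l))).Reachable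
      v ⟨some ⟨i₀, ja⟩, Finset.mem_coe.mpr hmema⟩ := by
    rintro ⟨v, hv⟩
    obtain ⟨j, rfl, -, -⟩ := hshape _ (Finset.mem_coe.mp hv)
    exact hkey (j : ℕ) j (Finset.mem_coe.mp hv) (by omega)
  have hne : Nonempty (↑s : Set (SV l)) := ⟨⟨some ⟨i₀, ja⟩, Finset.mem_coe.mpr hmema⟩⟩
  exact SimpleGraph.Connected.mk (fun u v => (hto u).trans (hto v).symm)

end Conn


/-! ### value function, counting helpers -/

section Val
variable {t : ℕ} {l : Fin t → ℕ}

def nn1 (s : Finset (SV l)) : ℕ := (univ.filter fun i => cnt s i % 3 = 1).card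
def nn2 (s : Finset (SV l)) : ℕ := (univ.filter fun i => cnt s i % 3 = 2).card

def val (s : Finset (SV l)) : ℕ :=
  if none ∈ s then fval (nn1 s) (nn2 s) else s.card % 3

lemma val_center {s : Finset (SV l)} (hc : none ∈ s) :
    val s = fval (nn1 s) (nn2 s) := if_pos hc

lemma val_nocenter {s : Finset (SV l)} (hc : none ∉ s) : val s = s.card % 3 := if_neg hc

lemma card_filter_split (p : Fin t → Prop) [DecidablePred p] (i₀ : Fin t) :
    ((univ : Finset (Fin t)).filter p).card
      = (((univ : Finset (Fin t)).erase i₀).filter p).card + (if p i₀ then 1 else 0) := by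
  conv_lhs => rw [← Finset.insert_erase (Finset.mem_univ i₀)]
  rw [Finset.filter_insert]
  split
  · rw [Finset.card_insert_of_notMem (fun hh =>
      Finset.notMem_erase i₀ univ (Finset.mem_of_mem_filter _ hh))]
  · omega

def kk1 (s : Finset (SV l)) (i₀ : Fin t) : ℕ :=
  (((univ : Finset (Fin t)).erase i₀).filter fun i => cnt s i % 3 = 1).card
def kk2 (s : Finset (SV l)) (i₀ : Fin t) : ℕ :=
  (((univ : Finset (Fin t)).erase i₀).filter fun i => cnt s i % 3 = 2).card

lemma nn1_split (s : Finset (SV l)) (i₀ : Fin t) :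
    nn1 s = kk1 s i₀ + (if cnt s i₀ % 3 = 1 then 1 else 0) :=
  card_filter_split _ i₀
lemma nn2_split (s : Finset (SV l)) (i₀ : Fin t) :
    nn2 s = kk2 s i₀ + (if cnt s i₀ % 3 = 2 then 1 else 0) :=
  card_filter_split _ i₀

lemma kk1_congr {s s' : Finset (SV l)} {i₀ : Fin t}
    (h : ∀ i, i ≠ i₀ → cnt s' i = cnt s i) : kk1 s' i₀ = kk1 s i₀ := by
  unfold kk1
  congr 1
  apply Finset.filter_congr
  intro i hi
  rw [h i (Finset.ne_of_mem_erase hi)]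

lemma kk2_congr {s s' : Finset (SV l)} {i₀ : Fin t}
    (h : ∀ i, i ≠ i₀ → cnt s' i = cnt s i) : kk2 s' i₀ = kk2 s i₀ := by
  unfold kk2
  congr 1
  apply Finset.filter_congr
  intro i hi
  rw [h i (Finset.ne_of_mem_erase hi)]

lemma sum_residue_decomp (A : Finset (Fin t)) (c : Fin t → ℕ) (hb : ∀ i ∈ A, c i ≤ 3) :
    ∑ i ∈ A, c i = (A.filter fun i => c i % 3 = 1).card
      + 2 * (A.filter fun i => c i % 3 = 2).card
      + 3 * (A.filter fun i => c i = 3).card := by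
  rw [Finset.card_filter, Finset.card_filter, Finset.card_filter, Finset.mul_sum,
    Finset.mul_sum, ← Finset.sum_add_distrib, ← Finset.sum_add_distrib]
  apply Finset.sum_congr rfl
  intro i hi
  have h3 := hb i hi
  split_ifs <;> omega

/-! ### move constructors -/

def keepTrimB (i₀ : Fin t) (a : ℕ) : SV l → Bool
  | none => true
  | some x => if x.1 = i₀ then decide ((x.2 : ℕ) < a) else true

def keepCutB (i₀ : Fin t) (a : ℕ) : SV l → Bool
  | none => false
  | some x => if x.1 = i₀ then decide (a ≤ (x.2 : ℕ)) else false

def trimT (s : Finset (SV l)) (i₀ : Fin t) (a : ℕ) : Finset (SV l) :=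
  s.filter (fun v => keepTrimB i₀ a v = true)

def cutT (s : Finset (SV l)) (i₀ : Fin t) (a : ℕ) : Finset (SV l) :=
  s.filter (fun v => keepCutB i₀ a v = true)

lemma keepCutB_eq_not (i₀ : Fin t) (a : ℕ) (v : SV l) :
    keepCutB i₀ a v = ! keepTrimB i₀ a v := by
  match v with
  | none => rfl
  | some x =>
    simp only [keepCutB, keepTrimB]
    split
    · rcases Nat.lt_or_ge (x.2 : ℕ) a with h | h
      · simp [h, Nat.not_le.mpr h]
      · simp [h, Nat.not_lt.mpr h]
    · rfl

lemma sdiff_trimT (s : Finset (SV l)) (i₀ : Fin t) (a : ℕ) :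
    s \ trimT s i₀ a = cutT s i₀ a := by
  rw [trimT, ← Finset.filter_not, cutT]
  apply Finset.filter_congr
  intro v _
  simp [keepCutB_eq_not]

lemma sdiff_cutT (s : Finset (SV l)) (i₀ : Fin t) (a : ℕ) :
    s \ cutT s i₀ a = trimT s i₀ a := by
  rw [cutT, ← Finset.filter_not, trimT]
  apply Finset.filter_congr
  intro v _
  simp [keepCutB_eq_not]

lemma none_mem_trimT {s : Finset (SV l)} {i₀ : Fin t} {a : ℕ} (hc : none ∈ s) :
    none ∈ trimT s i₀ a := by
  rw [trimT, Finset.mem_filter]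
  exact ⟨hc, rfl⟩

lemma none_not_mem_cutT {s : Finset (SV l)} {i₀ : Fin t} {a : ℕ} :
    none ∉ cutT s i₀ a := by
  rw [cutT, Finset.mem_filter]
  rintro ⟨-, h⟩
  simp [keepCutB] at h

lemma mem_trimT_some {s : Finset (SV l)} {i₀ : Fin t} {a : ℕ} {i : Fin t} {j : Fin (l i)} :
    some ⟨i, j⟩ ∈ trimT s i₀ a ↔ (some ⟨i, j⟩ ∈ s ∧ (i = i₀ → (j : ℕ) < a)) := by
  rw [trimT, Finset.mem_filter]
  simp only [keepTrimB]
  constructor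
  · rintro ⟨hm, hk⟩
    refine ⟨hm, fun hi => ?_⟩
    subst hi
    simpa using hk
  · rintro ⟨hm, hk⟩
    refine ⟨hm, ?_⟩
    split
    · next h => simpa using hk h
    · rfl

lemma mem_cutT_some {s : Finset (SV l)} {i₀ : Fin t} {a : ℕ} {i : Fin t} {j : Fin (l i)} :
    some ⟨i, j⟩ ∈ cutT s i₀ a ↔ (some ⟨i, j⟩ ∈ s ∧ i = i₀ ∧ a ≤ (j : ℕ)) := by
  rw [cutT, Finset.mem_filter]
  simp only [keepCutB]
  constructor
  · rintro ⟨hm, hk⟩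
    split at hk
    · next h => exact ⟨hm, h, by simpa using hk⟩
    · simp at hk
  · rintro ⟨hm, h1, h2⟩
    refine ⟨hm, ?_⟩
    rw [if_pos h1]
    simpa using h2

lemma msome_trimT {s : Finset (SV l)} {i₀ : Fin t} {a : ℕ} {i : Fin t} {m : ℕ} :
    msome (trimT s i₀ a) i m ↔ (msome s i m ∧ (i = i₀ → m < a)) := by
  unfold msome
  constructor
  · rintro ⟨j, rfl, hj⟩
    rw [mem_trimT_some] at hj
    exact ⟨⟨j, rfl, hj.1⟩, hj.2⟩
  · rintro ⟨⟨j, rfl, hj⟩, h2⟩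
    exact ⟨j, rfl, mem_trimT_some.mpr ⟨hj, h2⟩⟩

lemma msome_cutT {s : Finset (SV l)} {i₀ : Fin t} {a : ℕ} {i : Fin t} {m : ℕ} :
    msome (cutT s i₀ a) i m ↔ (msome s i m ∧ i = i₀ ∧ a ≤ m) := by
  unfold msome
  constructor
  · rintro ⟨j, rfl, hj⟩
    rw [mem_cutT_some] at hj
    exact ⟨⟨j, rfl, hj.1⟩, hj.2⟩
  · rintro ⟨⟨j, rfl, hj⟩, h2⟩
    exact ⟨j, rfl, mem_cutT_some.mpr ⟨hj, h2⟩⟩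

lemma PC_trimT {s : Finset (SV l)} {i₀ : Fin t} {a : ℕ} (hPC : PC s) :
    PC (trimT s i₀ a) := by
  intro i j k hj hk
  rw [mem_trimT_some] at hj ⊢
  exact ⟨hPC i j k hj.1 hk, fun hi => lt_of_le_of_lt hk (hj.2 hi)⟩

lemma cnt_trimT {s : Finset (SV l)} {i₀ : Fin t} {a : ℕ} (hPC : PC s) (ha : a ≤ cnt s i₀) :
    ∀ i, cnt (trimT s i₀ a) i = if i = i₀ then a else cnt s i := by
  intro i
  by_cases hi : i = i₀
  · subst hi
    rw [if_pos rfl]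
    have h1 : ∀ m, m < cnt (trimT s i a) i ↔ m < a := by
      intro m
      rw [← msome_iff_lt_cnt (PC_trimT hPC) i m, msome_trimT,
        msome_iff_lt_cnt hPC]
      constructor
      · rintro ⟨h2, h3⟩; exact h3 rfl
      · intro h2; exact ⟨by omega, fun _ => h2⟩
    have h2 := h1 (cnt (trimT s i a) i)
    have h3 := h1 a
    omega
  · rw [if_neg hi]
    unfold cnt brSet
    congr 1
    apply Finset.filter_congr
    intro j _
    rw [mem_trimT_some]
    exact ⟨fun h => h.1, fun h => ⟨h, fun hh => absurd hh hi⟩⟩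

lemma cnt_cutT {s : Finset (SV l)} {i₀ : Fin t} {a : ℕ} (hPC : PC s) :
    ∀ i, cnt (cutT s i₀ a) i = if i = i₀ then cnt s i₀ - a else 0 := by
  intro i
  by_cases hi : i = i₀
  · subst hi
    rw [if_pos rfl]
    apply cnt_of_interval (a := a) (b := cnt s i)
    intro m
    rw [msome_cutT, msome_iff_lt_cnt hPC]
    constructor
    · rintro ⟨h1, -, h2⟩; omega
    · rintro ⟨h1, h2⟩; exact ⟨h2, rfl, h1⟩
  · rw [if_neg hi]
    apply cnt_of_empty
    intro m hm
    rw [msome_cutT] at hm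
    exact hi hm.2.1

lemma card_cutT {s : Finset (SV l)} {i₀ : Fin t} {a : ℕ} (hPC : PC s) :
    (cutT s i₀ a).card = cnt s i₀ - a := by
  rw [cardDecomp (cutT s i₀ a), if_neg none_not_mem_cutT]
  rw [Finset.sum_congr rfl (fun i _ => cnt_cutT hPC i), Finset.sum_ite_eq' univ i₀]
  simp

lemma card_trimT {s : Finset (SV l)} {i₀ : Fin t} {a : ℕ} (hPC : PC s) (hc : none ∈ s)
    (ha : a ≤ cnt s i₀) :
    (trimT s i₀ a).card = 1 + ((∑ i ∈ univ.erase i₀, cnt s i) + a) := by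
  rw [cardDecomp (trimT s i₀ a), if_pos (none_mem_trimT hc)]
  rw [Finset.sum_congr rfl (fun i _ => cnt_trimT hPC ha i)]
  have hsum : (∑ i : Fin t, if i = i₀ then a else cnt s i)
      = a + ∑ i ∈ univ.erase i₀, cnt s i := by
    rw [← Finset.add_sum_erase _ (fun i => if i = i₀ then a else cnt s i)
      (Finset.mem_univ i₀), if_pos rfl]
    congr 1
    apply Finset.sum_congr rfl
    intro i hi
    exact if_neg (Finset.ne_of_mem_erase hi)
  rw [hsum]
  omega

end Val


/-! ### legal moves: constructors -/

section Moves
variable {t : ℕ} {l : Fin t → ℕ}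

lemma mem_iff_msome {s : Finset (SV l)} {i : Fin t} {j : Fin (l i)} :
    some ⟨i, j⟩ ∈ s ↔ msome s i (j : ℕ) := by
  constructor
  · exact fun h => ⟨j, rfl, h⟩
  · rintro ⟨j', hj', hm⟩
    have : j' = j := Fin.ext hj'
    subst this
    exact hm

lemma conn_cutT {s : Finset (SV l)} {i₀ : Fin t} {a : ℕ} (hPC : PC s)
    (ha : a < cnt s i₀) : ConnOn (subdividedStar l) ↑(cutT s i₀ a) := by
  apply connB (i₀ := i₀) (a := a) (b := cnt s i₀) ha
  · intro m h1 h2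
    rw [msome_cutT]
    exact ⟨(msome_iff_lt_cnt hPC i₀ m).mpr h2, rfl, h1⟩
  · intro v hv
    match v with
    | none => exact absurd hv none_not_mem_cutT
    | some ⟨i, j⟩ =>
      rw [mem_cutT_some] at hv
      obtain ⟨hs, rfl, hge⟩ := hv
      exact ⟨j, rfl, hge, (msome_iff_lt_cnt hPC i (j : ℕ)).mp (mem_iff_msome.mp hs)⟩

lemma csgmove_trimT {s : Finset (SV l)} (hc : none ∈ s) (hPC : PC s) {i₀ : Fin t} {a : ℕ}
    (ha : a < cnt s i₀)
    (hd : cnt s i₀ - a = 1 ∨ cnt s i₀ - a = 2 ∨ cnt s i₀ - a = 4) :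
    CsgMove (subdividedStar l) {1, 2, 4} s (trimT s i₀ a) := by
  refine ⟨Finset.filter_subset _ _, ?_, ?_, ?_, Or.inr (connA (none_mem_trimT hc) (PC_trimT hPC))⟩
  · rw [sdiff_trimT]
    obtain ⟨j, hj, hjm⟩ := (msome_iff_lt_cnt hPC i₀ a).mpr ha
    exact ⟨some ⟨i₀, j⟩, mem_cutT_some.mpr ⟨hjm, rfl, by omega⟩⟩
  · rw [sdiff_trimT, card_cutT hPC]
    simp only [Set.mem_insert_iff, Set.mem_singleton_iff]
    exact hd
  · rw [sdiff_trimT]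
    exact conn_cutT hPC ha

lemma csgmove_cutT {s : Finset (SV l)} (hc : none ∈ s) (hPC : PC s) {i₀ : Fin t} {p : ℕ}
    (hp : p ≤ cnt s i₀)
    (hcard : 1 + ((∑ i ∈ univ.erase i₀, cnt s i) + p) = 1 ∨
             1 + ((∑ i ∈ univ.erase i₀, cnt s i) + p) = 2 ∨
             1 + ((∑ i ∈ univ.erase i₀, cnt s i) + p) = 4) :
    CsgMove (subdividedStar l) {1, 2, 4} s (cutT s i₀ p) := by
  refine ⟨Finset.filter_subset _ _, ?_, ?_, ?_, ?_⟩
  · rw [sdiff_cutT]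
    exact ⟨none, none_mem_trimT hc⟩
  · rw [sdiff_cutT, card_trimT hPC hc hp]
    simp only [Set.mem_insert_iff, Set.mem_singleton_iff]
    exact hcard
  · rw [sdiff_cutT]
    exact connA (none_mem_trimT hc) (PC_trimT hPC)
  · rcases Nat.eq_or_lt_of_le hp with heq | hlt
    · left
      rw [← Finset.card_eq_zero, card_cutT hPC]
      omega
    · exact Or.inr (conn_cutT hPC hlt)

lemma csgmove_all {s : Finset (SV l)} (hconn : ConnOn (subdividedStar l) ↑s)
    (hcard : s.card = 1 ∨ s.card = 2 ∨ s.card = 4) :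
    CsgMove (subdividedStar l) {1, 2, 4} s ∅ := by
  refine ⟨Finset.empty_subset _, ?_, ?_, ?_, Or.inl rfl⟩
  · rw [Finset.sdiff_empty]
    exact Finset.card_pos.mp (by omega)
  · rw [Finset.sdiff_empty]
    simp only [Set.mem_insert_iff, Set.mem_singleton_iff]
    exact hcard
  · rw [Finset.sdiff_empty]
    exact hconn

lemma val_trimT {s : Finset (SV l)} (hc : none ∈ s) (hPC : PC s) {i₀ : Fin t} {a : ℕ}
    (ha : a ≤ cnt s i₀) :
    val (trimT s i₀ a) = fval (kk1 s i₀ + (if a % 3 = 1 then 1 else 0))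
      (kk2 s i₀ + (if a % 3 = 2 then 1 else 0)) := by
  have e1 : kk1 (trimT s i₀ a) i₀ = kk1 s i₀ :=
    kk1_congr (fun i hi => by rw [cnt_trimT hPC ha i]; exact if_neg hi)
  have e2 : kk2 (trimT s i₀ a) i₀ = kk2 s i₀ :=
    kk2_congr (fun i hi => by rw [cnt_trimT hPC ha i]; exact if_neg hi)
  rw [val_center (none_mem_trimT hc), nn1_split _ i₀, nn2_split _ i₀, e1, e2,
    cnt_trimT hPC ha i₀, if_pos rfl]

lemma val_cutT {s : Finset (SV l)} (hPC : PC s) {i₀ : Fin t} {a : ℕ} :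
    val (cutT s i₀ a) = (cnt s i₀ - a) % 3 := by
  rw [val_nocenter none_not_mem_cutT, card_cutT hPC]

lemma val_empty : val (∅ : Finset (SV l)) = 0 := by
  rw [val_nocenter (Finset.notMem_empty _), Finset.card_empty]

end Moves


/-! ### classification of positions and moves -/

section Classify
variable {t : ℕ} {l : Fin t → ℕ}

lemma shape_nocenter {s : Finset (SV l)} (h : ConnOn (subdividedStar l) ↑s) (hn : none ∉ s) :
    ∃ (i₀ : Fin t) (a b : ℕ), a < b ∧
      (∀ m, msome s i₀ m ↔ (a ≤ m ∧ m < b)) ∧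
      (∀ i, i ≠ i₀ → ∀ m, ¬ msome s i m) ∧
      s.card = b - a := by
  obtain ⟨v, hv⟩ := h.nonempty
  have hvs : v ∈ s := Finset.mem_coe.mp hv
  obtain ⟨i₀, j₀, rfl⟩ : ∃ (i : Fin t) (j : Fin (l i)), v = some ⟨i, j⟩ := by
    match v with
    | none => exact absurd hvs hn
    | some ⟨i, j⟩ => exact ⟨i, j, rfl⟩
  have hbne : (brN s i₀).Nonempty := ⟨(j₀ : ℕ), mem_brN.mpr ⟨j₀, rfl, hvs⟩⟩
  set A := (brN s i₀).min' hbne with hA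
  set B := (brN s i₀).max' hbne with hB
  have hAB : A ≤ B := Finset.min'_le _ _ ((brN s i₀).max'_mem hbne)
  obtain ⟨ja, hja, hjam⟩ := mem_brN.mp ((brN s i₀).min'_mem hbne)
  obtain ⟨jb, hjb, hjbm⟩ := mem_brN.mp ((brN s i₀).max'_mem hbne)
  have hint : ∀ m, msome s i₀ m ↔ (A ≤ m ∧ m < B + 1) := by
    intro m
    constructor
    · intro hm
      have h1 := Finset.min'_le _ _ (mem_brN.mpr hm)
      have h2 := Finset.le_max' _ _ (mem_brN.mpr hm)
      omega
    · rintro ⟨h1, h2⟩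
      rcases Nat.eq_or_lt_of_le (by omega : m ≤ B) with heq | hlt
      · subst heq; exact ⟨jb, hjb, hjbm⟩
      · exact conn_between h hjam hjbm (by omega) (by omega)
  have hoth : ∀ i, i ≠ i₀ → ∀ m, ¬ msome s i m := by
    rintro i hi m ⟨j, rfl, hm⟩
    exact hi (conn_branch h hn hm hvs)
  refine ⟨i₀, A, B + 1, by omega, hint, hoth, ?_⟩
  have hcnt : ∀ i, cnt s i = if i = i₀ then B + 1 - A else 0 := by
    intro i
    by_cases hi : i = i₀
    · subst hi; rw [if_pos rfl]; exact cnt_of_interval hint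
    · rw [if_neg hi]; exact cnt_of_empty (hoth i hi)
  rw [cardDecomp, if_neg hn, Finset.sum_congr rfl (fun i _ => hcnt i),
    Finset.sum_ite_eq' univ i₀]
  simp

lemma classify_star {s tt : Finset (SV l)} (hc : none ∈ s) (hPC : PC s)
    (hm : CsgMove (subdividedStar l) {1, 2, 4} s tt) :
    (∃ i₀ a, a < cnt s i₀ ∧
       (cnt s i₀ - a = 1 ∨ cnt s i₀ - a = 2 ∨ cnt s i₀ - a = 4) ∧ tt = trimT s i₀ a)
  ∨ (∃ i₀ p, p ≤ cnt s i₀ ∧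
       (1 + ((∑ i ∈ univ.erase i₀, cnt s i) + p) = 1 ∨
        1 + ((∑ i ∈ univ.erase i₀, cnt s i) + p) = 2 ∨
        1 + ((∑ i ∈ univ.erase i₀, cnt s i) + p) = 4) ∧ tt = cutT s i₀ p)
  ∨ (tt = ∅ ∧ (s.card = 1 ∨ s.card = 2 ∨ s.card = 4)) := by
  obtain ⟨hsub, hne, hcard, hconnr, hor⟩ := hm
  simp only [Set.mem_insert_iff, Set.mem_singleton_iff] at hcard
  have hmem_tt : ∀ v, v ∈ tt ↔ (v ∈ s ∧ v ∉ s \ tt) := by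
    intro v
    rw [Finset.mem_sdiff]
    constructor
    · intro h; exact ⟨hsub h, fun hh => hh.2 h⟩
    · rintro ⟨hs, hnd⟩; by_contra hvt; exact hnd ⟨hs, hvt⟩
  have hsubr : s \ tt ⊆ s := Finset.sdiff_subset
  by_cases hnt : none ∈ tt
  · -- removed set has no center: trim move
    left
    have hnr : none ∉ s \ tt := fun hh => (Finset.mem_sdiff.mp hh).2 hnt
    obtain ⟨i₀, a, b, hab, hint, hoth, hcardr⟩ := shape_nocenter hconnr hnr
    have hble : b ≤ cnt s i₀ := by
      obtain ⟨jb, hjb, hjbm⟩ := (hint (b - 1)).mpr ⟨by omega, by omega⟩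
      have := (msome_iff_lt_cnt hPC i₀ (b - 1)).mp ⟨jb, hjb, hsubr hjbm⟩
      omega
    have httconn : ConnOn (subdividedStar l) ↑tt := by
      rcases hor with h | h
      · rw [h] at hnt; exact absurd hnt (Finset.notMem_empty none)
      · exact h
    have hPCtt : PC tt := conn_center httconn hnt
    have hbeq : b = cnt s i₀ := by
      by_contra hbne
      have hblt : b < cnt s i₀ := by omega
      obtain ⟨j, hj, hjs⟩ := (msome_iff_lt_cnt hPC i₀ b).mpr hblt
      have hjr : some ⟨i₀, j⟩ ∉ s \ tt := by
        intro hh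
        have := (hint b).mp ⟨j, hj, hh⟩
        omega
      have hjtt : some ⟨i₀, j⟩ ∈ tt := (hmem_tt _).mpr ⟨hjs, hjr⟩
      obtain ⟨jb, hjb, hjbm⟩ := (hint (b - 1)).mpr ⟨by omega, by omega⟩
      have : some ⟨i₀, jb⟩ ∈ tt := hPCtt i₀ j jb hjtt (by omega)
      exact (Finset.mem_sdiff.mp hjbm).2 this
    refine ⟨i₀, a, by omega, ?_, ?_⟩
    · have he : cnt s i₀ - a = b - a := by omega
      rw [he, ← hcardr]
      exact hcard
    · ext v
      match v with
      | none => simp only [hnt, none_mem_trimT hc]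
      | some ⟨i, j⟩ =>
        rw [mem_trimT_some, hmem_tt]
        constructor
        · rintro ⟨hs, hnr'⟩
          refine ⟨hs, fun hii => ?_⟩
          subst hii
          by_contra hja
          have hjcnt := (msome_iff_lt_cnt hPC i (j : ℕ)).mp ⟨j, rfl, hs⟩
          obtain ⟨j', hj', hm'⟩ := (hint (j : ℕ)).mpr ⟨by omega, by omega⟩
          have : j' = j := Fin.ext hj'
          subst this
          exact hnr' hm'
        · rintro ⟨hs, himp⟩
          refine ⟨hs, fun hmr => ?_⟩
          by_cases hii : i = i₀
          · subst hii
            have := (hint (j : ℕ)).mp ⟨j, rfl, hmr⟩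
            have := himp rfl
            omega
          · exact hoth i hii (j : ℕ) ⟨j, rfl, hmr⟩
  · -- removed set contains the center
    by_cases htt : tt = ∅
    · right; right
      refine ⟨htt, ?_⟩
      rw [htt, Finset.sdiff_empty] at hcard
      exact hcard
    · right; left
      have httconn : ConnOn (subdividedStar l) ↑tt := hor.resolve_left htt
      obtain ⟨i₀, a, b, hab, hint, hoth, hcardtt⟩ := shape_nocenter httconn hnt
      have hnoneR : none ∈ s \ tt := Finset.mem_sdiff.mpr ⟨hc, hnt⟩
      have hPCr : PC (s \ tt) := conn_center hconnr hnoneR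
      have hble : b ≤ cnt s i₀ := by
        obtain ⟨jb, hjb, hjbm⟩ := (hint (b - 1)).mpr ⟨by omega, by omega⟩
        have := (msome_iff_lt_cnt hPC i₀ (b - 1)).mp ⟨jb, hjb, hsub hjbm⟩
        omega
      have hbeq : b = cnt s i₀ := by
        by_contra hbne
        have hblt : b < cnt s i₀ := by omega
        obtain ⟨j, hj, hjs⟩ := (msome_iff_lt_cnt hPC i₀ b).mpr hblt
        have hjr : some ⟨i₀, j⟩ ∈ s \ tt := by
          refine Finset.mem_sdiff.mpr ⟨hjs, fun hh => ?_⟩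
          have := (hint b).mp ⟨j, hj, hh⟩
          omega
        obtain ⟨jb, hjb, hjbm⟩ := (hint (b - 1)).mpr ⟨by omega, by omega⟩
        have : some ⟨i₀, jb⟩ ∈ s \ tt := hPCr i₀ j jb hjr (by omega)
        exact (Finset.mem_sdiff.mp this).2 hjbm
      refine ⟨i₀, a, by omega, ?_, ?_⟩
      · have hcnttt : ∀ i, cnt tt i = if i = i₀ then b - a else 0 := by
          intro i
          by_cases hi : i = i₀
          · subst hi; rw [if_pos rfl]; exact cnt_of_interval hint
          · rw [if_neg hi]; exact cnt_of_empty (hoth i hi)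
        have hcntr : ∀ i, cnt (s \ tt) i = if i = i₀ then a else cnt s i := by
          intro i
          rw [cnt_sdiff hsub i, hcnttt i]
          by_cases hi : i = i₀
          · subst hi
            rw [if_pos rfl, if_pos rfl]
            omega
          · rw [if_neg hi, if_neg hi]
            omega
        have hcr : (s \ tt).card = 1 + ((∑ i ∈ univ.erase i₀, cnt s i) + a) := by
          rw [cardDecomp, if_pos hnoneR, Finset.sum_congr rfl (fun i _ => hcntr i)]
          have hsum : (∑ i : Fin t, if i = i₀ then a else cnt s i)
              = a + ∑ i ∈ univ.erase i₀, cnt s i := by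
            rw [← Finset.add_sum_erase _ (fun i => if i = i₀ then a else cnt s i)
              (Finset.mem_univ i₀), if_pos rfl]
            congr 1
            apply Finset.sum_congr rfl
            intro i hi
            exact if_neg (Finset.ne_of_mem_erase hi)
          rw [hsum]
          omega
        rw [← hcr]
        exact hcard
      · ext v
        match v with
        | none =>
          simp only [hnt, none_not_mem_cutT]
        | some ⟨i, j⟩ =>
          rw [mem_cutT_some]
          constructor
          · intro hv
            by_cases hii : i = i₀
            · subst hii
              have := (hint (j : ℕ)).mp ⟨j, rfl, hv⟩
              exact ⟨hsub hv, rfl, by omega⟩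
            · exact absurd ⟨j, rfl, hv⟩ (hoth i hii (j : ℕ))
          · rintro ⟨hs, rfl, hge⟩
            have hlt := (msome_iff_lt_cnt hPC i (j : ℕ)).mp ⟨j, rfl, hs⟩
            obtain ⟨j', hj', hm'⟩ := (hint (j : ℕ)).mpr ⟨hge, by omega⟩
            have : j' = j := Fin.ext hj'
            subst this
            exact hm'

end Classify


/-! ### path moves -/

section PathMove
variable {t : ℕ} {l : Fin t → ℕ}

lemma csgmove_path_trim {s : Finset (SV l)} (hn : none ∉ s) {i₀ : Fin t} {a b : ℕ}
    (hab : a < b)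
    (hint : ∀ m, msome s i₀ m ↔ (a ≤ m ∧ m < b))
    (hoth : ∀ i, i ≠ i₀ → ∀ m, ¬ msome s i m)
    {d : ℕ} (hd : d = 1 ∨ d = 2) (hdb : d ≤ b - a) :
    CsgMove (subdividedStar l) {1, 2, 4} s (trimT s i₀ (b - d)) ∧
      (trimT s i₀ (b - d)).card = (b - a) - d := by
  have hcut_int : ∀ m, msome (cutT s i₀ (b - d)) i₀ m ↔ (b - d ≤ m ∧ m < b) := by
    intro m
    rw [msome_cutT, hint]
    omega
  have hcut_oth : ∀ i, i ≠ i₀ → ∀ m, ¬ msome (cutT s i₀ (b - d)) i m := by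
    intro i hi m hm
    rw [msome_cutT] at hm
    exact hi hm.2.1
  have hcut_cnt : ∀ i, cnt (cutT s i₀ (b - d)) i = if i = i₀ then d else 0 := by
    intro i
    by_cases hi : i = i₀
    · subst hi
      rw [if_pos rfl, cnt_of_interval hcut_int]
      omega
    · rw [if_neg hi]
      exact cnt_of_empty (hcut_oth i hi)
  have hcut_card : (cutT s i₀ (b - d)).card = d := by
    rw [cardDecomp, if_neg none_not_mem_cutT,
      Finset.sum_congr rfl (fun i _ => hcut_cnt i), Finset.sum_ite_eq' univ i₀]
    simp
  have htrim_int : ∀ m, msome (trimT s i₀ (b - d)) i₀ m ↔ (a ≤ m ∧ m < b - d) := by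
    intro m
    rw [msome_trimT, hint]
    constructor
    · rintro ⟨⟨h1, h2⟩, h3⟩
      exact ⟨h1, h3 rfl⟩
    · rintro ⟨h1, h2⟩
      exact ⟨⟨h1, by omega⟩, fun _ => h2⟩
  have htrim_oth : ∀ i, i ≠ i₀ → ∀ m, ¬ msome (trimT s i₀ (b - d)) i m := by
    intro i hi m hm
    rw [msome_trimT] at hm
    exact hoth i hi m hm.1
  have htrim_none : none ∉ trimT s i₀ (b - d) :=
    fun h => hn (Finset.filter_subset _ _ h)
  have htrim_card : (trimT s i₀ (b - d)).card = (b - a) - d := by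
    have hcnt : ∀ i, cnt (trimT s i₀ (b - d)) i = if i = i₀ then (b - d) - a else 0 := by
      intro i
      by_cases hi : i = i₀
      · subst hi
        rw [if_pos rfl, cnt_of_interval htrim_int]
      · rw [if_neg hi]
        exact cnt_of_empty (htrim_oth i hi)
    rw [cardDecomp, if_neg htrim_none,
      Finset.sum_congr rfl (fun i _ => hcnt i), Finset.sum_ite_eq' univ i₀]
    simp
    omega
  refine ⟨⟨Finset.filter_subset _ _, ?_, ?_, ?_, ?_⟩, htrim_card⟩
  · rw [sdiff_trimT]
    obtain ⟨j, hj, hjm⟩ := (hcut_int (b - 1)).mpr ⟨by omega, by omega⟩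
    exact ⟨some ⟨i₀, j⟩, hjm⟩
  · rw [sdiff_trimT, hcut_card]
    simp only [Set.mem_insert_iff, Set.mem_singleton_iff]
    omega
  · rw [sdiff_trimT]
    apply connB (i₀ := i₀) (a := b - d) (b := b) (by omega)
    · intro m h1 h2
      exact (hcut_int m).mpr ⟨h1, h2⟩
    · intro v hv
      match v with
      | none => exact absurd hv none_not_mem_cutT
      | some ⟨i, j⟩ =>
        rw [mem_cutT_some] at hv
        obtain ⟨hs, rfl, hge⟩ := hv
        have := (hint (j : ℕ)).mp ⟨j, rfl, hs⟩
        exact ⟨j, rfl, hge, by omega⟩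
  · rcases Nat.eq_or_lt_of_le (by omega : a ≤ b - d) with heq | hlt
    · left
      rw [← Finset.card_eq_zero, htrim_card]
      omega
    · right
      apply connB (i₀ := i₀) (a := a) (b := b - d) hlt
      · intro m h1 h2
        exact (htrim_int m).mpr ⟨h1, h2⟩
      · intro v hv
        match v with
        | none => exact absurd hv htrim_none
        | some ⟨i, j⟩ =>
          by_cases hi : i = i₀
          · subst hi
            have := (htrim_int (j : ℕ)).mp ⟨j, rfl, hv⟩
            exact ⟨j, rfl, this.1, this.2⟩
          · exact absurd ⟨j, rfl, hv⟩ (htrim_oth i hi (j : ℕ))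

end PathMove


/-! ### mex and grundy basics -/

lemma mex_eq_of {S : Set ℕ} {v : ℕ} (h1 : v ∉ S) (h2 : ∀ w < v, w ∈ S) : mex S = v := by
  unfold mex
  have hmem : v ∈ {n | n ∉ S} := h1
  apply le_antisymm (Nat.sInf_le hmem)
  by_contra hlt
  push_neg at hlt
  have hins := Nat.sInf_mem (⟨v, hmem⟩ : Set.Nonempty {n | n ∉ S})
  exact hins (h2 _ hlt)

lemma grundy_def {V' : Type*} [DecidableEq V'] (G : SimpleGraph V') (L : Set ℕ)
    (s : Finset V') :
    csgGrundy G L s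
      = mex (Set.range fun tt : {tt : Finset V' // CsgMove G L s tt} =>
          csgGrundy G L tt.1) := by
  rw [csgGrundy]

lemma move_card_lt {V' : Type*} [DecidableEq V'] {G : SimpleGraph V'} {L : Set ℕ}
    {s tt : Finset V'} (h : CsgMove G L s tt) : tt.card < s.card := by
  obtain ⟨x, hx⟩ := h.2.1
  rw [Finset.mem_sdiff] at hx
  exact Finset.card_lt_card ((Finset.ssubset_iff_of_subset h.1).2 ⟨x, hx.1, hx.2⟩)

lemma no_move_empty {V' : Type*} [DecidableEq V'] {G : SimpleGraph V'} {L : Set ℕ}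
    {tt : Finset V'} (h : CsgMove G L ∅ tt) : False := by
  obtain ⟨-, hne, -⟩ := h
  simp at hne

lemma grundy_empty {V' : Type*} [DecidableEq V'] (G : SimpleGraph V') (L : Set ℕ) :
    csgGrundy G L (∅ : Finset V') = 0 := by
  rw [grundy_def]
  apply mex_eq_of
  · rintro ⟨⟨tt, hm⟩, -⟩
    exact no_move_empty hm
  · intro w hw
    exact absurd hw (Nat.not_lt_zero w)

/-! ### the master theorem -/

section Master
variable {t : ℕ} {l : Fin t → ℕ}

lemma master : ∀ (N : ℕ) (s : Finset (SV l)), s.card ≤ N →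
    (s = ∅ ∨ ConnOn (subdividedStar l) ↑s) →
    csgGrundy (subdividedStar l) {1, 2, 4} s = val s := by
  intro N
  induction N with
  | zero =>
    intro s hcard _
    have hs : s = ∅ := Finset.card_eq_zero.mp (by omega)
    subst hs
    rw [grundy_empty, val_empty]
  | succ N ih =>
    intro s hcard hor
    rcases hor with rfl | hconn
    · rw [grundy_empty, val_empty]
    rw [grundy_def]
    have hval : ∀ tt : {tt : Finset (SV l) // CsgMove (subdividedStar l) {1, 2, 4} s tt},
        csgGrundy (subdividedStar l) {1, 2, 4} tt.1 = val tt.1 := by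
      rintro ⟨tt, hm⟩
      apply ih
      · show tt.card ≤ N
        have := move_card_lt hm; omega
      · rcases hm.2.2.2.2 with h | h
        · exact Or.inl h
        · exact Or.inr h
    have hrange : (fun tt : {tt : Finset (SV l) // CsgMove (subdividedStar l) {1, 2, 4} s tt} =>
          csgGrundy (subdividedStar l) {1, 2, 4} tt.1)
        = (fun tt => val tt.1) := funext hval
    rw [hrange]
    by_cases hc : none ∈ s
    · -- star-shaped position
      have hPC : PC s := conn_center hconn hc
      rw [val_center hc]
      apply mex_eq_of
      · -- no option has the same value
        rintro ⟨⟨tt, hm⟩, hv⟩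
        simp only at hv
        rcases classify_star hc hPC hm with
          ⟨i₀, a, ha, hd, rfl⟩ | ⟨i₀, p, hp, hcd, rfl⟩ | ⟨rfl, hcd⟩
        · rw [val_trimT hc hPC (le_of_lt ha)] at hv
          rw [nn1_split s i₀, nn2_split s i₀] at hv
          have hne := trim_ineq (kk1 s i₀) (kk2 s i₀) (cnt s i₀) (cnt s i₀ - a) hd (by omega)
          have ha' : cnt s i₀ - (cnt s i₀ - a) = a := by omega
          rw [ha'] at hne
          exact hne hv
        · rw [val_cutT hPC] at hv
          rw [nn1_split s i₀, nn2_split s i₀] at hv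
          have hb3 : ∀ i ∈ univ.erase i₀, cnt s i ≤ 3 := by
            intro i hi
            have hle : cnt s i ≤ ∑ i ∈ univ.erase i₀, cnt s i :=
              Finset.single_le_sum (fun _ _ => Nat.zero_le _) hi
            omega
          have hdec := sum_residue_decomp (univ.erase i₀) (cnt s) hb3
          have harg : 1 + (kk1 s i₀ + 2 * kk2 s i₀ +
              3 * (((univ.erase i₀).filter fun i => cnt s i = 3).card)) + p = 1 ∨
              1 + (kk1 s i₀ + 2 * kk2 s i₀ +
              3 * (((univ.erase i₀).filter fun i => cnt s i = 3).card)) + p = 2 ∨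
              1 + (kk1 s i₀ + 2 * kk2 s i₀ +
              3 * (((univ.erase i₀).filter fun i => cnt s i = 3).card)) + p = 4 := by
            unfold kk1 kk2
            omega
          exact (center_ineq _ _ _ _ _ harg hp) hv.symm
        · rw [val_empty] at hv
          have hcards : s.card = 1 + ∑ i, cnt s i := by rw [cardDecomp, if_pos hc]
          have hb3 : ∀ i ∈ (univ : Finset (Fin t)), cnt s i ≤ 3 := by
            intro i hi
            have hle : cnt s i ≤ ∑ i, cnt s i :=
              Finset.single_le_sum (fun _ _ => Nat.zero_le _) hi
            omega
          have hdec := sum_residue_decomp univ (cnt s) hb3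
          have harg : 1 + (nn1 s + 2 * nn2 s +
              3 * ((univ.filter fun i => cnt s i = 3).card)) = 1 ∨
              1 + (nn1 s + 2 * nn2 s +
              3 * ((univ.filter fun i => cnt s i = 3).card)) = 2 ∨
              1 + (nn1 s + 2 * nn2 s +
              3 * ((univ.filter fun i => cnt s i = 3).card)) = 4 := by
            unfold nn1 nn2
            omega
          exact (whole_ineq _ _ _ harg) hv.symm
      · -- all smaller values are achieved
        intro w hw
        rcases recipe (nn1 s) (nn2 s) w
            (decide (∃ i, cnt s i % 3 = 0 ∧ 0 < cnt s i)) hw with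
          ⟨h1, hwe⟩ | ⟨h1, hwe⟩ | ⟨h1, hwe⟩ | ⟨hzt, hwe⟩ | ⟨hzt, hwe⟩ |
          ⟨h1, h2, hzf, hw0⟩ | ⟨h1, h2, hzf, hw0⟩
        · -- trim a residue-1 branch by 1
          obtain ⟨i₀, hi₀⟩ := Finset.card_pos.mp (show 0 < nn1 s by omega)
          have hres : cnt s i₀ % 3 = 1 := (Finset.mem_filter.mp hi₀).2
          refine ⟨⟨_, csgmove_trimT hc hPC (show cnt s i₀ - 1 < cnt s i₀ by omega)
            (by omega)⟩, ?_⟩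
          simp only
          rw [val_trimT hc hPC (by omega)]
          have h3 : (cnt s i₀ - 1) % 3 = 0 := by omega
          rw [h3, hwe]
          have e1 := nn1_split s i₀
          have e2 := nn2_split s i₀
          rw [hres] at e1 e2
          norm_num at e1 e2 ⊢
          rw [show kk1 s i₀ = nn1 s - 1 by omega, show kk2 s i₀ = nn2 s by omega]
        · -- trim a residue-2 branch by 1
          obtain ⟨i₀, hi₀⟩ := Finset.card_pos.mp (show 0 < nn2 s by omega)
          have hres : cnt s i₀ % 3 = 2 := (Finset.mem_filter.mp hi₀).2
          refine ⟨⟨_, csgmove_trimT hc hPC (show cnt s i₀ - 1 < cnt s i₀ by omega)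
            (by omega)⟩, ?_⟩
          simp only
          rw [val_trimT hc hPC (by omega)]
          have h3 : (cnt s i₀ - 1) % 3 = 1 := by omega
          rw [h3, hwe]
          have e1 := nn1_split s i₀
          have e2 := nn2_split s i₀
          rw [hres] at e1 e2
          norm_num at e1 e2 ⊢
          rw [show kk1 s i₀ + 1 = nn1 s + 1 by omega, show kk2 s i₀ = nn2 s - 1 by omega]
        · -- trim a residue-2 branch by 2
          obtain ⟨i₀, hi₀⟩ := Finset.card_pos.mp (show 0 < nn2 s by omega)
          have hres : cnt s i₀ % 3 = 2 := (Finset.mem_filter.mp hi₀).2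
          refine ⟨⟨_, csgmove_trimT hc hPC (show cnt s i₀ - 2 < cnt s i₀ by omega)
            (by omega)⟩, ?_⟩
          simp only
          rw [val_trimT hc hPC (by omega)]
          have h3 : (cnt s i₀ - 2) % 3 = 0 := by omega
          rw [h3, hwe]
          have e1 := nn1_split s i₀
          have e2 := nn2_split s i₀
          rw [hres] at e1 e2
          norm_num at e1 e2 ⊢
          rw [show kk1 s i₀ = nn1 s by omega, show kk2 s i₀ = nn2 s - 1 by omega]
        · -- trim a nonzero residue-0 branch by 1
          obtain ⟨i₀, hres, hpos⟩ := of_decide_eq_true hzt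
          refine ⟨⟨_, csgmove_trimT hc hPC (show cnt s i₀ - 1 < cnt s i₀ by omega)
            (by omega)⟩, ?_⟩
          simp only
          rw [val_trimT hc hPC (by omega)]
          have h3 : (cnt s i₀ - 1) % 3 = 2 := by omega
          rw [h3, hwe]
          have e1 := nn1_split s i₀
          have e2 := nn2_split s i₀
          rw [hres] at e1 e2
          norm_num at e1 e2 ⊢
          rw [show kk1 s i₀ = nn1 s by omega, show kk2 s i₀ + 1 = nn2 s + 1 by omega]
        · -- trim a nonzero residue-0 branch by 2
          obtain ⟨i₀, hres, hpos⟩ := of_decide_eq_true hzt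
          refine ⟨⟨_, csgmove_trimT hc hPC (show cnt s i₀ - 2 < cnt s i₀ by omega)
            (by omega)⟩, ?_⟩
          simp only
          rw [val_trimT hc hPC (by omega)]
          have h3 : (cnt s i₀ - 2) % 3 = 1 := by omega
          rw [h3, hwe]
          have e1 := nn1_split s i₀
          have e2 := nn2_split s i₀
          rw [hres] at e1 e2
          norm_num at e1 e2 ⊢
          rw [show kk1 s i₀ + 1 = nn1 s + 1 by omega, show kk2 s i₀ = nn2 s by omega]
        · -- (1,0) with no nonzero residue-0 branch
          have hz : ¬ ∃ i, cnt s i % 3 = 0 ∧ 0 < cnt s i := of_decide_eq_false hzf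
          push_neg at hz
          obtain ⟨i₀, hi₀⟩ := Finset.card_pos.mp (show 0 < nn1 s by omega)
          have hres : cnt s i₀ % 3 = 1 := (Finset.mem_filter.mp hi₀).2
          have hall : ∀ i, i ≠ i₀ → cnt s i = 0 := by
            intro i hi
            rcases (by omega : cnt s i % 3 = 0 ∨ cnt s i % 3 = 1 ∨ cnt s i % 3 = 2)
              with h0 | h0 | h0
            · have := hz i
              omega
            · exfalso
              have hsubp : ({i₀, i} : Finset (Fin t)) ⊆
                  (univ.filter fun i => cnt s i % 3 = 1) := by
                intro x hx
                simp only [Finset.mem_insert, Finset.mem_singleton] at hx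
                rcases hx with rfl | rfl
                · exact hi₀
                · exact Finset.mem_filter.mpr ⟨Finset.mem_univ _, h0⟩
              have hcard2 : ({i₀, i} : Finset (Fin t)).card = 2 := by
                rw [Finset.card_insert_of_notMem (by simpa using (Ne.symm hi)),
                  Finset.card_singleton]
              have := Finset.card_le_card hsubp
              rw [hcard2] at this
              have : nn1 s ≥ 2 := this
              omega
            · exfalso
              have : i ∈ (univ.filter fun i => cnt s i % 3 = 2) :=
                Finset.mem_filter.mpr ⟨Finset.mem_univ _, h0⟩
              have h22 : (univ.filter fun i : Fin t => cnt s i % 3 = 2) = ∅ :=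
                Finset.card_eq_zero.mp h2
              rw [h22] at this
              exact absurd this (Finset.notMem_empty _)
          rcases Nat.eq_or_lt_of_le (show 1 ≤ cnt s i₀ by omega) with hone | hbig
          · -- single leaf: remove everything
            have hsum : ∑ i, cnt s i = 1 := by
              have hcongr : ∀ i ∈ (univ : Finset (Fin t)),
                  cnt s i = if i = i₀ then 1 else 0 := by
                intro i _
                by_cases hi : i = i₀
                · subst hi; rw [if_pos rfl]; omega
                · rw [if_neg hi]; exact hall i hi
              rw [Finset.sum_congr rfl hcongr, Finset.sum_ite_eq' univ i₀]
              simp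
            have hcs : s.card = 2 := by
              rw [cardDecomp, if_pos hc, hsum]
            refine ⟨⟨∅, csgmove_all hconn (by omega)⟩, ?_⟩
            simp only
            rw [val_empty, hw0]
          · -- long residue-1 branch: trim by 2
            have hge4 : 4 ≤ cnt s i₀ := by omega
            refine ⟨⟨_, csgmove_trimT hc hPC (show cnt s i₀ - 2 < cnt s i₀ by omega)
              (by omega)⟩, ?_⟩
            simp only
            rw [val_trimT hc hPC (by omega)]
            have h3 : (cnt s i₀ - 2) % 3 = 2 := by omega
            rw [h3, hw0]
            have e1 := nn1_split s i₀
            have e2 := nn2_split s i₀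
            rw [hres] at e1 e2
            norm_num at e1 e2
            rw [show kk1 s i₀ = 0 by omega, show kk2 s i₀ = 0 by omega]
            decide
        · -- (0,0) with no nonzero residue-0 branch: single center vertex
          have hz : ¬ ∃ i, cnt s i % 3 = 0 ∧ 0 < cnt s i := of_decide_eq_false hzf
          push_neg at hz
          have hall : ∀ i, cnt s i = 0 := by
            intro i
            rcases (by omega : cnt s i % 3 = 0 ∨ cnt s i % 3 = 1 ∨ cnt s i % 3 = 2)
              with h0 | h0 | h0
            · have := hz i; omega
            · exfalso
              have : i ∈ (univ.filter fun i => cnt s i % 3 = 1) :=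
                Finset.mem_filter.mpr ⟨Finset.mem_univ _, h0⟩
              have h11 : (univ.filter fun i : Fin t => cnt s i % 3 = 1) = ∅ :=
                Finset.card_eq_zero.mp h1
              rw [h11] at this
              exact absurd this (Finset.notMem_empty _)
            · exfalso
              have : i ∈ (univ.filter fun i => cnt s i % 3 = 2) :=
                Finset.mem_filter.mpr ⟨Finset.mem_univ _, h0⟩
              have h22 : (univ.filter fun i : Fin t => cnt s i % 3 = 2) = ∅ :=
                Finset.card_eq_zero.mp h2
              rw [h22] at this
              exact absurd this (Finset.notMem_empty _)
          have hcs : s.card = 1 := by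
            rw [cardDecomp, if_pos hc, Finset.sum_congr rfl (fun i _ => hall i)]
            simp
          refine ⟨⟨∅, csgmove_all hconn (by omega)⟩, ?_⟩
          simp only
          rw [val_empty, hw0]
    · -- path-shaped position
      rw [val_nocenter hc]
      apply mex_eq_of
      · rintro ⟨⟨tt, hm⟩, hv⟩
        simp only at hv
        have hnt : none ∉ tt := fun h => hc (hm.1 h)
        rw [val_nocenter hnt] at hv
        have hsub := hm.1
        have hcard' : tt.card = s.card - (s \ tt).card := by
          rw [Finset.card_sdiff_of_subset hsub]
          have := Finset.card_le_card hsub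
          omega
        have hd := hm.2.2.1
        simp only [Set.mem_insert_iff, Set.mem_singleton_iff] at hd
        have hdle : (s \ tt).card ≤ s.card := Finset.card_le_card Finset.sdiff_subset
        rw [hcard'] at hv
        exact path_ineq s.card _ hd hdle hv
      · intro w hw
        obtain ⟨i₀, a, b, hab, hint, hoth, hcards⟩ := shape_nocenter hconn hc
        have hd3 : s.card % 3 ≤ 2 := by omega
        have hd : s.card % 3 - w = 1 ∨ s.card % 3 - w = 2 := by omega
        have hdb : s.card % 3 - w ≤ b - a := by omega
        obtain ⟨hmv, hcardtt⟩ := csgmove_path_trim hc hab hint hoth hd hdb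
        refine ⟨⟨_, hmv⟩, ?_⟩
        simp only
        have hnt2 : none ∉ trimT s i₀ (b - (s.card % 3 - w)) :=
          fun h => hc (Finset.filter_subset _ _ h)
        rw [val_nocenter hnt2, hcardtt]
        omega

end Master


/-! ### grundy value of the full star -/

section Univ
variable {t : ℕ}

lemma grundy_univ (l : Fin t → ℕ) :
    csgGrundy (subdividedStar l) {1, 2, 4} (univ : Finset (SV l)) =
      fval ((univ.filter fun i => l i % 3 = 1).card)
           ((univ.filter fun i => l i % 3 = 2).card) := by
  have hPC : PC (univ : Finset (SV l)) := fun i j k _ _ => Finset.mem_univ _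
  have hc : none ∈ (univ : Finset (SV l)) := Finset.mem_univ _
  have hconn := connA hc hPC
  rw [master (univ : Finset (SV l)).card univ le_rfl (Or.inr hconn), val_center hc]
  have hcnt : ∀ i, cnt (univ : Finset (SV l)) i = l i := by
    intro i
    unfold cnt brSet
    rw [Finset.filter_true_of_mem (fun _ _ => Finset.mem_univ _), Finset.card_univ,
      Fintype.card_fin]
  unfold nn1 nn2
  have e1 : ((univ : Finset (Fin t)).filter fun i => cnt (univ : Finset (SV l)) i % 3 = 1)
      = (univ : Finset (Fin t)).filter fun i => l i % 3 = 1 :=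
    Finset.filter_congr (fun i _ => by rw [hcnt i])
  have e2 : ((univ : Finset (Fin t)).filter fun i => cnt (univ : Finset (SV l)) i % 3 = 2)
      = (univ : Finset (Fin t)).filter fun i => l i % 3 = 2 :=
    Finset.filter_congr (fun i _ => by rw [hcnt i])
  rw [e1, e2]

lemma snoc_count (l : Fin t → ℕ) (x r : ℕ) :
    ((univ : Finset (Fin (t + 1))).filter fun i => ((Fin.snoc l x : Fin (t + 1) → ℕ) i) % 3 = r).card
      = ((univ : Finset (Fin t)).filter fun i => l i % 3 = r).card
        + (if x % 3 = r then 1 else 0) := by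
  rw [Finset.card_filter, Finset.card_filter, Fin.sum_univ_castSucc]
  congr 1
  · apply Finset.sum_congr rfl
    intro i _
    rw [Fin.snoc_castSucc]
  · rw [Fin.snoc_last]

end Univ

end CSG19

/-- For CSG({1,2,4}) on subdivided stars, appending 3 extra vertices to a
branch does not change the Grundy value. -/
theorem stmt19 (t m : ℕ) (l : Fin t → ℕ) :
    csgGrundy (subdividedStar (Fin.snoc l (m + 3))) ({1, 2, 4} : Set ℕ)
      Finset.univ =
    csgGrundy (subdividedStar (Fin.snoc l m)) ({1, 2, 4} : Set ℕ)
      Finset.univ := by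
  rw [CSG19.grundy_univ, CSG19.grundy_univ, CSG19.snoc_count, CSG19.snoc_count,
    CSG19.snoc_count, CSG19.snoc_count]
  have h3 : (m + 3) % 3 = m % 3 := by omega
  rw [h3]
end
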